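/- arXiv:1002.2696 — 5 statements merged into one kernel-verified Lean document; each statement's English description precedes it below -/
import Mathlib

section
/- Let A be an n×n J-sign-symmetric real matrix. Then the spectral radius ρ(A) ≥ 0 is an eigenvalue of A. -/
open Matrix Complex Finset

/-- The multiset of complex eigenvalues (listed with algebraic multiplicity) of a real
square matrix, i.e. the roots of its characteristic polynomial over `ℂ`. -/
noncomputable def specM {ι : Type*} [Fintype ι] [DecidableEq ι]
    (A : Matrix ι ι ℝ) : Multiset ℂ :=
  (A.map Complex.ofReal).charpoly.roots

/-- The spectral radius: maximum modulus of the complex eigenvalues. -/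
noncomputable def specRad {ι : Type*} [Fintype ι] [DecidableEq ι]
    (A : Matrix ι ι ℝ) : ℝ :=
  sSup ((fun z : ℂ => ‖z‖) '' {z : ℂ | z ∈ specM A})

open Classical in
/-- The algebraic multiplicity of `z` as an eigenvalue of `A`. -/
noncomputable def algMult {ι : Type*} [Fintype ι] [DecidableEq ι]
    (A : Matrix ι ι ℝ) (z : ℂ) : ℕ :=
  Multiset.count z (specM A)

open Classical in
/-- The number of eigenvalues of `A` (with algebraic multiplicity) of modulus `r`. -/
noncomputable def countModulus {ι : Type*} [Fintype ι] [DecidableEq ι]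
    (A : Matrix ι ι ℝ) (r : ℝ) : ℕ :=
  Multiset.card ((specM A).filter fun z => ‖z‖ = r)

/-- `h(A)`: the number of eigenvalues of `A` (with algebraic multiplicity) whose
modulus equals the spectral radius. -/
noncomputable def perCount {ι : Type*} [Fintype ι] [DecidableEq ι]
    (A : Matrix ι ι ℝ) : ℕ :=
  countModulus A (specRad A)

/-- `J` is a witness of `J`-sign-symmetricity for `A`: (a) `A i j ≤ 0` whenever exactly one
of `i`, `j` belongs to `J`, and (b) whenever `A i j < 0`, exactly one of `i`, `j` is in `J`. -/
def IsJWitness {ι : Type*} [Fintype ι] [DecidableEq ι]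
    (A : Matrix ι ι ℝ) (J : Finset ι) : Prop :=
  (∀ i j, Xor' (i ∈ J) (j ∈ J) → A i j ≤ 0) ∧
  (∀ i j, A i j < 0 → Xor' (i ∈ J) (j ∈ J))

/-- A matrix is `J`-sign-symmetric if some witness set `J` exists. -/
def JSignSym {ι : Type*} [Fintype ι] [DecidableEq ι] (A : Matrix ι ι ℝ) : Prop :=
  ∃ J : Finset ι, IsJWitness A J

/-- A square matrix is reducible if, after a simultaneous permutation of rows and columns,
it has block form `[[A₁, 0], [B, A₂]]`; equivalently there is a nonempty proper index set `S`
with `A i j = 0` for all `i ∈ S`, `j ∉ S`. -/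
def IsReducibleMat {ι : Type*} [Fintype ι] [DecidableEq ι] (A : Matrix ι ι ℝ) : Prop :=
  ∃ S : Finset ι, S.Nonempty ∧ S ≠ Finset.univ ∧ ∀ i ∈ S, ∀ j ∉ S, A i j = 0

/-- A square matrix is irreducible if it is not reducible. -/
def IsIrredMat {ι : Type*} [Fintype ι] [DecidableEq ι] (A : Matrix ι ι ℝ) : Prop :=
  ¬ IsReducibleMat A

/-- Index type of the second compound matrix: pairs `(i, j)` with `i < j`. -/
abbrev Idx2 (n : ℕ) := {p : Fin n × Fin n // p.1 < p.2}

/-- The second compound matrix of `A`: its entry at `((i,j),(k,l))` is the minor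
`a_{ik} a_{jl} - a_{il} a_{jk}`. -/
def compound2 {n : ℕ} (A : Matrix (Fin n) (Fin n) ℝ) : Matrix (Idx2 n) (Idx2 n) ℝ :=
  fun p q => A p.1.1 q.1.1 * A p.1.2 q.1.2 - A p.1.1 q.1.2 * A p.1.2 q.1.1

/-- `W` satisfies conditions (1) and (2): `W ∪ W̃` is everything and `W ∩ W̃ = Δ`. -/
def WCond {n : ℕ} (W : Finset (Fin n × Fin n)) : Prop :=
  (∀ p : Fin n × Fin n, p ∈ W ∨ p.swap ∈ W) ∧
  (∀ p : Fin n × Fin n, (p ∈ W ∧ p.swap ∈ W) ↔ p.1 = p.2)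

/-- Index type of the `W`-matrix: the pairs in `W ∖ Δ`. -/
abbrev WIdx {n : ℕ} (W : Finset (Fin n × Fin n)) := {p : Fin n × Fin n // p ∈ W ∧ p.1 ≠ p.2}

/-- The `W`-matrix `A_W^{(2)}`: rows and columns indexed by `W ∖ Δ`, entries the `2×2` minors. -/
def Wmatrix {n : ℕ} (A : Matrix (Fin n) (Fin n) ℝ) (W : Finset (Fin n × Fin n)) :
    Matrix (WIdx W) (WIdx W) ℝ :=
  fun p q => A p.1.1 q.1.1 * A p.1.2 q.1.2 - A p.1.1 q.1.2 * A p.1.2 q.1.1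

/-- The set `Ŵ(J, J̃)` built from a witness `J` for `A` and a witness `J̃` for `A^{(2)}`. -/
def WhatSet {n : ℕ} (J : Finset (Fin n)) (Jt : Finset (Idx2 n)) : Set (Fin n × Fin n) :=
  {p | (∃ h : p.1 < p.2,
          ((p.1 ∈ J ↔ p.2 ∈ J) ∧ (⟨p, h⟩ : Idx2 n) ∈ Jt) ∨
          (¬(p.1 ∈ J ↔ p.2 ∈ J) ∧ (⟨p, h⟩ : Idx2 n) ∉ Jt)) ∨
       (∃ h : p.2 < p.1,
          ((p.1 ∈ J ↔ p.2 ∈ J) ∧ (⟨(p.2, p.1), h⟩ : Idx2 n) ∉ Jt) ∨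
          (¬(p.1 ∈ J ↔ p.2 ∈ J) ∧ (⟨(p.2, p.1), h⟩ : Idx2 n) ∈ Jt))}

/-- A set of pairs is transitive if `(i,j) ∈ W` and `(j,k) ∈ W` imply `(i,k) ∈ W`. -/
def TransPairs {n : ℕ} (W : Set (Fin n × Fin n)) : Prop :=
  ∀ i j k : Fin n, (i, j) ∈ W → (j, k) ∈ W → (i, k) ∈ W

/-- Two square matrices are similar if `M = S N S⁻¹` for some invertible `S`. -/
def SimilarMat {ι : Type*} [Fintype ι] [DecidableEq ι] (M N : Matrix ι ι ℝ) : Prop :=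
  ∃ S : Matrix ι ι ℝ, IsUnit S ∧ M = S * N * S⁻¹


section FinalAssembly
open Polynomial Filter
open scoped NNReal ENNReal Topology

lemma charmatrix_expand {R : Type*} [CommRing R] {m : Type*} [Fintype m] [DecidableEq m]
    (N : Matrix m m R) :
    charmatrix N = Matrix.diagonal (fun _ => (Polynomial.X : R[X])) - N.map Polynomial.C := by
  ext i j : 2
  simp [Matrix.charmatrix_apply, Matrix.sub_apply, Matrix.map_apply]

lemma charpoly_conj_self {R : Type*} [CommRing R] {m : Type*} [Fintype m] [DecidableEq m]
    (D M : Matrix m m R) (hD : D * D = 1) : (D * M * D).charpoly = M.charpoly := by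
  have hD' : D.map Polynomial.C * D.map Polynomial.C = (1 : Matrix m m R[X]) := by
    rw [← Matrix.map_mul, hD, Matrix.map_one _ (map_zero _) (map_one _)]
  have hscalar : Matrix.diagonal (fun _ => (Polynomial.X : R[X]))
      = Matrix.scalar m (Polynomial.X : R[X]) := (Matrix.scalar_apply _).symm
  have hcm : charmatrix (D * M * D) = D.map Polynomial.C * charmatrix M * D.map Polynomial.C := by
    rw [charmatrix_expand, charmatrix_expand, Matrix.map_mul, Matrix.map_mul,
      mul_sub, sub_mul]
    congr 1
    rw [hscalar]
    have hcomm : D.map Polynomial.C * Matrix.scalar m (Polynomial.X : R[X])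
        = Matrix.scalar m (Polynomial.X : R[X]) * D.map Polynomial.C :=
      ((Matrix.scalar_commute (Polynomial.X : R[X]) (fun r => Commute.all _ r)
        (D.map Polynomial.C))).symm
    rw [hcomm, mul_assoc, hD', mul_one]
  rw [Matrix.charpoly, Matrix.charpoly, hcm, Matrix.det_mul, Matrix.det_mul,
    mul_comm ((D.map Polynomial.C).det) _, mul_assoc, ← Matrix.det_mul, hD',
    Matrix.det_one, mul_one]

section
variable {n : ℕ}
attribute [local instance] Matrix.linftyOpSemiNormedRing Matrix.linftyOpNormedRing Matrix.linftyOpNormedAlgebra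

lemma my_smul_one (z : ℂ) : z • (1 : Matrix (Fin n) (Fin n) ℂ) = Matrix.scalar (Fin n) z := by
  rw [Matrix.scalar_apply]; ext i j
  by_cases h : i = j <;> simp [Matrix.one_apply, Matrix.diagonal, h]

lemma my_eval_charpoly (M : Matrix (Fin n) (Fin n) ℂ) (z : ℂ) :
    M.charpoly.eval z = (z • (1 : Matrix (Fin n) (Fin n) ℂ) - M).det := by
  rw [Matrix.charpoly, _root_.eval_det, Matrix.matPolyEquiv_charmatrix, my_smul_one]
  simp

lemma mem_specM_iff (B : Matrix (Fin n) (Fin n) ℝ) (z : ℂ) :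
    z ∈ specM B ↔ ¬ IsUnit (z • (1 : Matrix (Fin n) (Fin n) ℂ) - B.map Complex.ofReal) := by
  rw [specM, Polynomial.mem_roots ((B.map Complex.ofReal).charpoly_monic.ne_zero),
    Polynomial.IsRoot, my_eval_charpoly, Matrix.isUnit_iff_isUnit_det, isUnit_iff_ne_zero,
    not_ne_iff]

lemma mem_spectrum_iff_specM (B : Matrix (Fin n) (Fin n) ℝ) (z : ℂ) :
    z ∈ spectrum ℂ (B.map Complex.ofReal) ↔ z ∈ specM B := by
  rw [spectrum.mem_iff, Algebra.algebraMap_eq_smul_one, mem_specM_iff]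

lemma card_specM (B : Matrix (Fin n) (Fin n) ℝ) : Multiset.card (specM B) = n := by
  rw [specM, Polynomial.splits_iff_card_roots.mp (IsAlgClosed.splits _),
    Matrix.charpoly_natDegree_eq_dim, Fintype.card_fin]

lemma pow_entry_nonneg' {B : Matrix (Fin n) (Fin n) ℝ} (hB : ∀ i j, 0 ≤ B i j) (k : ℕ) :
    ∀ i j, 0 ≤ (B ^ k) i j := by
  induction k with
  | zero => intro i j; by_cases h : i = j <;> simp [Matrix.one_apply, h]
  | succ k ih =>
      intro i j
      rw [pow_succ, Matrix.mul_apply]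
      exact Finset.sum_nonneg fun l _ => mul_nonneg (ih i l) (hB l j)

lemma map_pow_entry' (B : Matrix (Fin n) (Fin n) ℝ) (k : ℕ) (i j : Fin n) :
    ((B.map Complex.ofReal) ^ k) i j = (((B ^ k) i j : ℝ) : ℂ) := by
  have h : B.map Complex.ofReal = Complex.ofRealHom.mapMatrix B := rfl
  rw [h, ← map_pow]
  rfl

lemma entry_le_norm' (M : Matrix (Fin n) (Fin n) ℂ) (i j : Fin n) : ‖M i j‖ ≤ ‖M‖ := by
  rw [Matrix.linfty_opNorm_def]
  have h1 : ‖M i j‖₊ ≤ ∑ j' : Fin n, ‖M i j'‖₊ :=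
    Finset.single_le_sum (f := fun j' => ‖M i j'‖₊) (fun _ _ => zero_le) (Finset.mem_univ j)
  have h2 : (∑ j' : Fin n, ‖M i j'‖₊) ≤ (Finset.univ : Finset (Fin n)).sup
      (fun i => ∑ j' : Fin n, ‖M i j'‖₊) :=
    Finset.le_sup (f := fun i => ∑ j' : Fin n, ‖M i j'‖₊) (Finset.mem_univ i)
  exact_mod_cast h1.trans h2

lemma norm_le_of_entries {M : Matrix (Fin n) (Fin n) ℂ} {c : ℝ} (hc : 0 ≤ c)
    (h : ∀ i j, ‖M i j‖ ≤ c) : ‖M‖ ≤ n * c := by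
  rw [Matrix.linfty_opNorm_def]
  have key : (Finset.univ : Finset (Fin n)).sup (fun i => ∑ j' : Fin n, ‖M i j'‖₊)
      ≤ (n : ℝ≥0) * c.toNNReal := by
    refine Finset.sup_le fun i _ => ?_
    calc ∑ j' : Fin n, ‖M i j'‖₊ ≤ ∑ _j' : Fin n, c.toNNReal := by
          refine Finset.sum_le_sum fun j' _ => ?_
          rw [← NNReal.coe_le_coe, coe_nnnorm, Real.coe_toNNReal c hc]
          exact h i j'
      _ = (n : ℝ≥0) * c.toNNReal := by
          rw [Finset.sum_const, Finset.card_univ, Fintype.card_fin, nsmul_eq_mul]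
  calc ((Finset.univ.sup fun i => ∑ j' : Fin n, ‖M i j'‖₊ : ℝ≥0) : ℝ)
      ≤ (((n : ℝ≥0) * c.toNNReal : ℝ≥0) : ℝ) := by exact_mod_cast key
    _ = n * c := by
        push_cast [Real.coe_toNNReal c hc]
        ring
lemma norm_pow_eventually_le (M : Matrix (Fin n) (Fin n) ℂ) {ρ r : ℝ}
    (hsr : spectralRadius ℂ M ≤ ENNReal.ofReal ρ) (hρ : 0 ≤ ρ) (hr : ρ < r) :
    ∀ᶠ k in Filter.atTop, ‖M ^ k‖ ≤ r ^ k := by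
  have hr0 : 0 < r := lt_of_le_of_lt hρ hr
  have hgel := spectrum.pow_nnnorm_pow_one_div_tendsto_nhds_spectralRadius M
  have hlt : spectralRadius ℂ M < ENNReal.ofReal r :=
    lt_of_le_of_lt hsr ((ENNReal.ofReal_lt_ofReal_iff hr0).mpr hr)
  have hev : ∀ᶠ (k : ℕ) in Filter.atTop,
      (‖M ^ k‖₊ : ℝ≥0∞) ^ (1 / (k : ℝ)) < ENNReal.ofReal r := hgel.eventually_lt_const hlt
  filter_upwards [hev, Filter.eventually_ge_atTop 1] with k hk hk1
  have hk0 : (k : ℝ) ≠ 0 := Nat.cast_ne_zero.mpr (by omega)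
  have hx : ((‖M ^ k‖₊ : ℝ≥0∞) ^ (1 / (k : ℝ))) ^ (k : ℝ) = (‖M ^ k‖₊ : ℝ≥0∞) := by
    rw [← ENNReal.rpow_mul, one_div_mul_cancel hk0, ENNReal.rpow_one]
  have h2 : (‖M ^ k‖₊ : ℝ≥0∞) ≤ (ENNReal.ofReal r) ^ (k : ℝ) := by
    rw [← hx]
    exact ENNReal.rpow_le_rpow hk.le (Nat.cast_nonneg k)
  have h3 : (ENNReal.ofReal r) ^ (k : ℝ) = ENNReal.ofReal (r ^ k) := by
    rw [← Real.rpow_natCast r k]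
    exact ENNReal.ofReal_rpow_of_pos hr0
  rw [h3, ← ENNReal.ofReal_coe_nnreal, coe_nnnorm,
    ENNReal.ofReal_le_ofReal_iff (by positivity)] at h2
  exact h2

lemma resolvent_key (B : Matrix (Fin n) (Fin n) ℝ) (hB : ∀ i j, 0 ≤ B i j) {ρ : ℝ}
    (hρ : 0 ≤ ρ) (hsr : spectralRadius ℂ (B.map Complex.ofReal) ≤ ENNReal.ofReal ρ)
    {z : ℂ} {t : ℝ} (ht : ‖z‖ = t) (hz : ρ < t) :
    ∃ S : Matrix (Fin n) (Fin n) ℂ,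
      (z • (1 : Matrix (Fin n) (Fin n) ℂ) - B.map Complex.ofReal) * S = 1 ∧
      S * (z • (1 : Matrix (Fin n) (Fin n) ℂ) - B.map Complex.ofReal) = 1 ∧
      (∀ i j, ‖S i j‖ ≤ ∑' k : ℕ, t⁻¹ ^ (k+1) * (B ^ k) i j) ∧
      (∀ i j, S i j = ∑' k : ℕ, (z⁻¹) ^ (k+1) * (((B ^ k) i j : ℝ) : ℂ)) := by
  set Mc := B.map Complex.ofReal with hMc
  have ht0 : 0 < t := lt_of_le_of_lt hρ hz
  have hz0 : z ≠ 0 := by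
    intro h; rw [h] at ht; simp at ht; rw [← ht] at ht0; exact lt_irrefl _ ht0
  have hznorm : ‖z‖ = t := by rw [ht]
  set r := (ρ + t)/2 with hr
  have hρr : ρ < r := by rw [hr]; linarith
  have hrt : r < t := by rw [hr]; linarith
  have hr0 : 0 < r := by rw [hr]; linarith
  have hgrow := norm_pow_eventually_le Mc hsr hρ hρr
  set f : ℕ → Matrix (Fin n) (Fin n) ℂ := fun k => (z⁻¹) ^ (k+1) • Mc ^ k with hf
  have hnormf : ∀ k, ‖f k‖ = t⁻¹ ^ (k+1) * ‖Mc ^ k‖ := by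
    intro k
    rw [hf]
    simp only [norm_smul, norm_pow, norm_inv, hznorm]
  set g : ℕ → ℝ := fun k => t⁻¹ * (r * t⁻¹) ^ k with hgdef
  have hrt1 : r * t⁻¹ < 1 := by
    rw [← div_eq_mul_inv, div_lt_one ht0]; exact hrt
  have hrtnn : 0 ≤ r * t⁻¹ := by positivity
  have hg : Summable g := (summable_geometric_of_lt_one hrtnn hrt1).mul_left _
  have hcomp : ∀ k, t⁻¹ ^ (k+1) * r ^ k = g k := by
    intro k
    rw [hgdef]
    simp only [pow_succ, mul_pow]
    ring
  have hfg : ∀ᶠ k in Filter.atTop, ‖f k‖ ≤ g k := by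
    filter_upwards [hgrow] with k hk
    rw [hnormf, ← hcomp k]
    have : 0 ≤ t⁻¹ ^ (k+1) := by positivity
    exact mul_le_mul_of_nonneg_left hk this
  have hfsum : Summable f := Summable.of_norm_bounded_eventually_nat hg hfg
  set S := ∑' k, f k with hS
  set g' : ℕ → Matrix (Fin n) (Fin n) ℂ := fun k => (z⁻¹) ^ k • Mc ^ k with hg'
  have htel : ∀ k, (z • (1 : Matrix (Fin n) (Fin n) ℂ) - Mc) * f k = g' k - g' (k+1) := by
    intro k
    have hzz : (z⁻¹) ^ (k+1) * z = (z⁻¹) ^ k := by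
      rw [pow_succ, mul_assoc, inv_mul_cancel₀ hz0, mul_one]
    calc (z • (1 : Matrix (Fin n) (Fin n) ℂ) - Mc) * ((z⁻¹) ^ (k+1) • Mc ^ k)
        = (z⁻¹) ^ (k+1) • ((z • (1 : Matrix (Fin n) (Fin n) ℂ) - Mc) * Mc ^ k) :=
          mul_smul_comm _ _ _
      _ = (z⁻¹) ^ (k+1) • (z • Mc ^ k - Mc ^ (k+1)) := by
          rw [sub_mul, smul_mul_assoc, one_mul, ← pow_succ']
      _ = ((z⁻¹) ^ (k+1) * z) • Mc ^ k - (z⁻¹) ^ (k+1) • Mc ^ (k+1) := by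
          rw [smul_sub, smul_smul]
      _ = g' k - g' (k+1) := by rw [hzz]
  have hg'bound : ∀ᶠ k in Filter.atTop, ‖g' k‖ ≤ (r * t⁻¹) ^ k := by
    filter_upwards [hgrow] with k hk
    have : ‖g' k‖ = t⁻¹ ^ k * ‖Mc ^ k‖ := by
      rw [hg']; simp only [norm_smul, norm_pow, norm_inv, hznorm]
    rw [this, mul_pow]
    calc t⁻¹ ^ k * ‖Mc ^ k‖ ≤ t⁻¹ ^ k * r ^ k :=
          mul_le_mul_of_nonneg_left hk (by positivity)
      _ = r ^ k * (t⁻¹) ^ k := by ring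
  have hg'0 : Tendsto g' atTop (𝓝 0) :=
    squeeze_zero_norm' hg'bound (tendsto_pow_atTop_nhds_zero_of_lt_one hrtnn hrt1)
  have hsum2 : Summable (fun k => (z • (1 : Matrix (Fin n) (Fin n) ℂ) - Mc) * f k) :=
    hfsum.mul_left _
  have h3 : Tendsto (fun N => ∑ k ∈ Finset.range N,
      ((z • (1 : Matrix (Fin n) (Fin n) ℂ) - Mc) * f k)) atTop (𝓝 1) := by
    have heq : ∀ N, ∑ k ∈ Finset.range N, ((z • (1 : Matrix (Fin n) (Fin n) ℂ) - Mc) * f k)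
        = g' 0 - g' N := by
      intro N
      rw [Finset.sum_congr rfl (fun k _ => htel k)]
      exact Finset.sum_range_sub' g' N
    have hg'zero : g' 0 = 1 := by rw [hg']; simp
    have h5 := (tendsto_const_nhds (x := g' 0)).sub hg'0
    rw [sub_zero, hg'zero] at h5
    refine h5.congr fun N => ?_
    rw [heq N, hg'zero]
  have h4 : HasSum (fun k => (z • (1 : Matrix (Fin n) (Fin n) ℂ) - Mc) * f k) 1 :=
    hsum2.hasSum_iff_tendsto_nat.mpr h3
  have hS1 : (z • (1 : Matrix (Fin n) (Fin n) ℂ) - Mc) * S = 1 := by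
    rw [hS, ← hfsum.tsum_mul_left]
    exact h4.tsum_eq
  have hS2 : S * (z • (1 : Matrix (Fin n) (Fin n) ℂ) - Mc) = 1 :=
    mul_eq_one_comm.mp hS1
  have hEc : ∀ i j : Fin n, ∃ E : Matrix (Fin n) (Fin n) ℂ →L[ℂ] ℂ, ∀ M, E M = M i j := by
    intro i j
    let E : Matrix (Fin n) (Fin n) ℂ →ₗ[ℂ] ℂ :=
      { toFun := fun M => M i j, map_add' := fun _ _ => rfl, map_smul' := fun _ _ => rfl }
    exact ⟨E.mkContinuous 1 (fun M => by rw [one_mul]; exact entry_le_norm' M i j), fun M => rfl⟩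
  have hterm : ∀ (i j : Fin n) (k : ℕ), f k i j = (z⁻¹) ^ (k+1) * (((B ^ k) i j : ℝ) : ℂ) := by
    intro i j k
    rw [hf]
    simp only [Matrix.smul_apply, smul_eq_mul]
    rw [hMc, map_pow_entry' B k i j]
  have hentry2 : ∀ i j, S i j = ∑' k : ℕ, f k i j := by
    intro i j
    obtain ⟨E, hE⟩ := hEc i j
    calc S i j = E S := (hE S).symm
      _ = ∑' k, E (f k) := by rw [hS]; exact E.map_tsum hfsum
      _ = ∑' k : ℕ, f k i j := tsum_congr fun k => hE (f k)
  have hentryformula : ∀ i j, S i j = ∑' k : ℕ, (z⁻¹) ^ (k+1) * (((B ^ k) i j : ℝ) : ℂ) := by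
    intro i j
    rw [hentry2 i j]
    exact tsum_congr fun k => hterm i j k
  have htermnorm : ∀ (i j : Fin n) (k : ℕ), ‖f k i j‖ = t⁻¹ ^ (k+1) * (B ^ k) i j := by
    intro i j k
    rw [hterm i j k, norm_mul, norm_pow, norm_inv, hznorm, Complex.norm_real,
      Real.norm_eq_abs, _root_.abs_of_nonneg (pow_entry_nonneg' hB k i j)]
  have hsumnorm : ∀ i j, Summable (fun k : ℕ => ‖f k i j‖) := by
    intro i j
    refine Summable.of_norm_bounded_eventually_nat hg ?_
    filter_upwards [hfg] with k hk
    rw [norm_norm]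
    exact (entry_le_norm' (f k) i j).trans hk
  refine ⟨S, hS1, hS2, ?_, hentryformula⟩
  intro i j
  calc ‖S i j‖ ≤ ∑' k : ℕ, ‖f k i j‖ := by
        rw [hentry2 i j]; exact norm_tsum_le_tsum_norm (hsumnorm i j)
    _ = ∑' k : ℕ, t⁻¹ ^ (k+1) * (B ^ k) i j := tsum_congr fun k => htermnorm i j k

lemma PFcore (hn : 0 < n) (B : Matrix (Fin n) (Fin n) ℝ) (hB : ∀ i j, 0 ≤ B i j) :
    0 ≤ specRad B ∧ ((specRad B : ℂ) ∈ specM B) := by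
  have hcard : Multiset.card (specM B) = n := card_specM B
  have hne0 : specM B ≠ 0 := by
    intro h; rw [h] at hcard; simp at hcard; omega
  obtain ⟨w₀, hw₀⟩ := Multiset.exists_mem_of_ne_zero hne0
  have hfin : ((fun z : ℂ => ‖z‖) '' {z : ℂ | z ∈ specM B}).Finite :=
    ((specM B).finite_toSet).image _
  have hnne : ((fun z : ℂ => ‖z‖) '' {z : ℂ | z ∈ specM B}).Nonempty := ⟨‖w₀‖, ⟨w₀, hw₀, rfl⟩⟩
  have hρmem : specRad B ∈ (fun z : ℂ => ‖z‖) '' {z : ℂ | z ∈ specM B} := by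
    rw [specRad]; exact hnne.csSup_mem hfin
  obtain ⟨lam, hlam, hlamabs⟩ := hρmem
  set ρ := specRad B with hρdef
  have hub : ∀ w ∈ specM B, ‖w‖ ≤ ρ := fun w hw =>
    le_csSup hfin.bddAbove ⟨w, hw, rfl⟩
  have hρ0 : 0 ≤ ρ := hlamabs ▸ norm_nonneg lam
  refine ⟨hρ0, ?_⟩
  by_contra hcon
  set Mc := B.map Complex.ofReal with hMcdef
  have hρpos : 0 < ρ := by
    rcases lt_or_eq_of_le hρ0 with h | h
    · exact h
    · exfalso
      apply hcon
      have hlam0 : lam = 0 := by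
        have h2 := hlamabs
        rw [← h] at h2
        exact norm_eq_zero.mp h2
      have : ((ρ : ℝ) : ℂ) = lam := by rw [← h, hlam0]; simp
      rw [this]; exact hlam
  have hsr : spectralRadius ℂ Mc ≤ ENNReal.ofReal ρ := by
    rw [spectralRadius]
    refine iSup₂_le fun w hw => ?_
    rw [← ENNReal.ofReal_coe_nnreal, coe_nnnorm]
    apply ENNReal.ofReal_le_ofReal
    exact hub w ((mem_spectrum_iff_specM B w).mp hw)
  have hUnitρ : IsUnit ((ρ : ℂ) • (1 : Matrix (Fin n) (Fin n) ℂ) - Mc) := by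
    by_contra h
    exact hcon ((mem_specM_iff B _).mpr h)
  set Fn : ℝ → Matrix (Fin n) (Fin n) ℂ :=
    fun s => Ring.inverse ((s : ℂ) • (1 : Matrix (Fin n) (Fin n) ℂ) - Mc) with hFn
  have hcontG : Continuous (fun s : ℝ =>
      (s : ℂ) • (1 : Matrix (Fin n) (Fin n) ℂ) - Mc) :=
    (Complex.continuous_ofReal.smul continuous_const).sub continuous_const
  have hcontF : ContinuousAt Fn ρ := by
    have h1 : ContinuousAt (Ring.inverse : Matrix (Fin n) (Fin n) ℂ → Matrix (Fin n) (Fin n) ℂ)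
        ((ρ : ℂ) • (1 : Matrix (Fin n) (Fin n) ℂ) - Mc) := by
      have h2 := NormedRing.inverse_continuousAt hUnitρ.unit
      rwa [IsUnit.unit_spec] at h2
    exact ContinuousAt.comp (g := (Ring.inverse : Matrix (Fin n) (Fin n) ℂ → Matrix (Fin n) (Fin n) ℂ)) h1 hcontG.continuousAt
  obtain ⟨δ₀, hδ₀pos, hδ₀⟩ := Metric.continuousAt_iff.mp hcontF 1 one_pos
  set c := ‖Fn ρ‖ + 1 with hc
  have hcpos : 0 < c := by rw [hc]; positivity
  set ε := min (δ₀/2) (1/(2*(n:ℝ)*c+1)) with hε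
  have hεpos : 0 < ε := lt_min (by linarith) (by positivity)
  have hεδ : ε < δ₀ := lt_of_le_of_lt (min_le_left _ _) (by linarith)
  have hεnc : ε * ((n:ℝ)*c) < 1 := by
    have h1 : ε ≤ 1/(2*(n:ℝ)*c+1) := min_le_right _ _
    have hncnn : 0 ≤ (n:ℝ)*c := by positivity
    calc ε * ((n:ℝ)*c) ≤ (1/(2*(n:ℝ)*c+1)) * ((n:ℝ)*c) :=
          mul_le_mul_of_nonneg_right h1 hncnn
      _ < 1 := by
          rw [one_div, inv_mul_eq_div, div_lt_one (by positivity)]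
          linarith
  set t := ρ + ε with htdef
  have hρt : ρ < t := by rw [htdef]; linarith
  have ht0 : 0 < t := lt_of_le_of_lt hρ0 hρt
  set δ := ε / ρ with hδdef
  have hδpos : 0 < δ := div_pos hεpos hρpos
  set z := ((1 + δ : ℝ) : ℂ) * lam with hzdef
  have habsz : ‖z‖ = t := by
    rw [hzdef, norm_mul, Complex.norm_real, Real.norm_eq_abs, @id (‖lam‖ = ρ) hlamabs,
      _root_.abs_of_pos (by positivity : (0:ℝ) < 1 + δ), htdef, hδdef]
    field_simp
  obtain ⟨S, hS1, hS2, hS3, _⟩ := resolvent_key B hB hρ0 hsr habsz hρt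
  rw [← hMcdef] at hS1 hS2
  have habst : ‖((t : ℝ) : ℂ)‖ = t := by
    rw [Complex.norm_real, Real.norm_eq_abs, _root_.abs_of_pos ht0]
  obtain ⟨S', hS'1, hS'2, _, hS'4⟩ := resolvent_key B hB hρ0 hsr habst hρt
  rw [← hMcdef] at hS'1 hS'2
  have hFt : Fn t = S' := by
    rw [hFn]
    exact Ring.inverse_unit ⟨_, S', hS'1, hS'2⟩
  have hdist : dist t ρ < δ₀ := by
    rw [Real.dist_eq, htdef]
    simpa [_root_.abs_of_pos hεpos] using hεδ
  have hFt_norm : ‖Fn t‖ ≤ c := by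
    have h2 : ‖Fn t - Fn ρ‖ < 1 := by
      have h3 := hδ₀ hdist
      rwa [dist_eq_norm] at h3
    calc ‖Fn t‖ = ‖(Fn t - Fn ρ) + Fn ρ‖ := by rw [sub_add_cancel]
      _ ≤ ‖Fn t - Fn ρ‖ + ‖Fn ρ‖ := norm_add_le _ _
      _ ≤ c := by rw [hc]; linarith
  have hS'entry : ∀ i j, ‖S' i j‖ = ∑' k : ℕ, t⁻¹ ^ (k+1) * (B^k) i j := by
    intro i j
    rw [hS'4 i j]
    have hcast : ∀ k : ℕ, (((t : ℝ) : ℂ))⁻¹ ^ (k+1) * (((B^k) i j : ℝ) : ℂ)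
        = ((t⁻¹ ^ (k+1) * (B^k) i j : ℝ) : ℂ) := by
      intro k; push_cast; ring
    rw [tsum_congr hcast, ← Complex.ofReal_tsum, Complex.norm_real, Real.norm_eq_abs,
      _root_.abs_of_nonneg]
    exact tsum_nonneg fun k => mul_nonneg (by positivity) (pow_entry_nonneg' hB k i j)
  have hSentry : ∀ i j, ‖S i j‖ ≤ c := by
    intro i j
    calc ‖S i j‖ ≤ ∑' k : ℕ, t⁻¹ ^ (k+1) * (B^k) i j := hS3 i j
      _ = ‖S' i j‖ := (hS'entry i j).symm
      _ ≤ ‖S'‖ := entry_le_norm' S' i j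
      _ = ‖Fn t‖ := by rw [hFt]
      _ ≤ c := hFt_norm
  have hSnorm : ‖S‖ ≤ (n:ℝ) * c := norm_le_of_entries hcpos.le hSentry
  have hzlam : z - lam = ((δ : ℝ) : ℂ) * lam := by
    rw [hzdef]; push_cast; ring
  have habszlam : ‖z - lam‖ = ε := by
    rw [hzlam, norm_mul, Complex.norm_real, Real.norm_eq_abs, _root_.abs_of_pos hδpos,
      @id (‖lam‖ = ρ) hlamabs, hδdef]
    field_simp
  have hsmall : ‖(z - lam) • S‖ < 1 := by
    rw [norm_smul, habszlam]
    calc ε * ‖S‖ ≤ ε * ((n:ℝ)*c) := mul_le_mul_of_nonneg_left hSnorm hεpos.le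
      _ < 1 := hεnc
  have hkey : lam • (1 : Matrix (Fin n) (Fin n) ℂ) - Mc
      = (z • (1 : Matrix (Fin n) (Fin n) ℂ) - Mc) * (1 - (z - lam) • S) := by
    rw [mul_sub, mul_one, mul_smul_comm, hS1, sub_right_comm, ← sub_smul, sub_sub_cancel]
  have hUnitlam : IsUnit (lam • (1 : Matrix (Fin n) (Fin n) ℂ) - Mc) := by
    rw [hkey]
    exact IsUnit.mul ⟨⟨_, S, hS1, hS2⟩, rfl⟩ (isUnit_one_sub_of_norm_lt_one hsmall)
  exact (mem_specM_iff B lam).mp hlam hUnitlam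

end


/-- the spectral radius of a `J`-sign-symmetric matrix is a nonnegative
eigenvalue of the matrix. -/
theorem stmt1 {n : ℕ} (hn : 0 < n) (A : Matrix (Fin n) (Fin n) ℝ) (hA : JSignSym A) :
    0 ≤ specRad A ∧ ((specRad A : ℂ) ∈ specM A) := by
  classical
  obtain ⟨J, hJa, hJb⟩ := hA
  set d : Fin n → ℝ := fun i => if i ∈ J then -1 else 1 with hd
  set D := Matrix.diagonal d with hD
  have hDD : D * D = 1 := by
    rw [hD, Matrix.diagonal_mul_diagonal]
    have h1 : (fun i => d i * d i) = fun _ => (1:ℝ) := by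
      funext i; rw [hd]; by_cases h : i ∈ J <;> simp [h]
    rw [h1, Matrix.diagonal_one]
  set B := D * A * D with hB
  have hBnn : ∀ i j, 0 ≤ B i j := by
    intro i j
    have hBij : B i j = d i * A i j * d j := by
      rw [hB, hD, Matrix.mul_diagonal, Matrix.diagonal_mul]
    rw [hBij]
    by_cases hi : i ∈ J <;> by_cases hj : j ∈ J
    · have h0 : 0 ≤ A i j := by
        refine le_of_not_gt fun hlt => ?_
        rcases hJb i j hlt with ⟨_, h⟩ | ⟨_, h⟩
        exacts [h hj, h hi]
      simp only [hd, if_pos hi, if_pos hj]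
      nlinarith
    · have h0 : A i j ≤ 0 := hJa i j (Or.inl ⟨hi, hj⟩)
      simp only [hd, if_pos hi, if_neg hj]
      nlinarith
    · have h0 : A i j ≤ 0 := hJa i j (Or.inr ⟨hj, hi⟩)
      simp only [hd, if_neg hi, if_pos hj]
      nlinarith
    · have h0 : 0 ≤ A i j := by
        refine le_of_not_gt fun hlt => ?_
        rcases hJb i j hlt with ⟨h, _⟩ | ⟨h, _⟩
        exacts [hi h, hj h]
      simp only [hd, if_neg hi, if_neg hj]
      nlinarith
  have hmul : B.map Complex.ofReal
      = (D.map Complex.ofReal) * (A.map Complex.ofReal) * (D.map Complex.ofReal) := by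
    rw [hB]
    calc (D * A * D).map Complex.ofReal = Complex.ofRealHom.mapMatrix (D * A * D) := rfl
      _ = Complex.ofRealHom.mapMatrix D * Complex.ofRealHom.mapMatrix A
          * Complex.ofRealHom.mapMatrix D := by rw [_root_.map_mul, _root_.map_mul]
      _ = (D.map Complex.ofReal) * (A.map Complex.ofReal) * (D.map Complex.ofReal) := rfl
  have hDD' : (D.map Complex.ofReal) * (D.map Complex.ofReal) = 1 := by
    calc (D.map Complex.ofReal) * (D.map Complex.ofReal)
        = Complex.ofRealHom.mapMatrix (D * D) := by rw [_root_.map_mul]; rfl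
      _ = 1 := by rw [hDD, _root_.map_one]
  have hcp : (B.map Complex.ofReal).charpoly = (A.map Complex.ofReal).charpoly := by
    rw [hmul]
    exact charpoly_conj_self _ _ hDD'
  have hsM : specM A = specM B := by rw [specM, specM, hcp]
  have hsR : specRad A = specRad B := by rw [specRad, specRad, hsM]
  obtain ⟨h0, hmem⟩ := PFcore hn B hBnn
  rw [hsR, hsM]
  exact ⟨h0, hmem⟩

end FinalAssembly
end

section
/- Let A be an n×n J-sign-symmetric real matrix and suppose that at least one diagonal entry a_{ii} is nonzero. Then the spectral radius ρ(A) is strictly positive and is a (positive) eigenvalue of A. -/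
open Matrix Complex Finset

section PFaux

open Polynomial Filter

variable {m : ℕ}

lemma derivative_finprod {α : Type*} [Fintype α] [DecidableEq α] (f : α → Polynomial ℂ) :
    derivative (∏ i, f i) = ∑ i, (∏ j ∈ Finset.univ.erase i, f j) * derivative (f i) := by
  classical
  rw [Finset.prod_eq_multiset_prod, Polynomial.derivative_prod]
  rfl

lemma map_det_eval (t : ℂ) (M : Matrix (Fin m) (Fin m) (Polynomial ℂ)) :
    Polynomial.eval t M.det = (M.map (Polynomial.eval t)).det := by
  have := RingHom.map_det (Polynomial.evalRingHom t) M
  simpa using this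

lemma map_updateRow (t : ℂ) (M : Matrix (Fin m) (Fin m) (Polynomial ℂ)) (k : Fin m)
    (r : Fin m → Polynomial ℂ) :
    (M.updateRow k r).map (Polynomial.eval t)
      = (M.map (Polynomial.eval t)).updateRow k (fun j => Polynomial.eval t (r j)) := by
  ext i j
  by_cases h : i = k
  · subst h; simp [Matrix.updateRow_apply, Matrix.map_apply]
  · simp [Matrix.updateRow_apply, h, Matrix.map_apply]

lemma det_derivative (M : Matrix (Fin m) (Fin m) (Polynomial ℂ)) :
    derivative M.det = ∑ k, (M.updateRow k fun j => derivative (M k j)).det := by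
  rw [Matrix.det_apply', map_sum]
  simp only [Matrix.det_apply']
  rw [Finset.sum_comm]
  refine Finset.sum_congr rfl fun σ _ => ?_
  rw [derivative_mul]
  have hε : derivative (Equiv.Perm.sign σ : Polynomial ℂ) = 0 := by
    rcases Int.units_eq_one_or (Equiv.Perm.sign σ) with h | h <;> simp [h]
  rw [hε, zero_mul, zero_add, ← Finset.mul_sum]
  congr 1
  rw [derivative_finprod]
  rw [← Equiv.sum_comp σ (fun k => ∏ j, (M.updateRow k fun j' => derivative (M k j')) (σ j) j)]
  refine Finset.sum_congr rfl fun i _ => ?_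
  have hrow : ∀ j, (M.updateRow (σ i) fun j' => derivative (M (σ i) j')) (σ j) j
      = Function.update (fun j => M (σ j) j) i (derivative (M (σ i) i)) j := by
    intro j
    by_cases hj : j = i
    · subst hj; simp [Matrix.updateRow_apply, Function.update_apply]
    · have : σ j ≠ σ i := fun hc => hj (σ.injective hc)
      simp [Matrix.updateRow_apply, Function.update_apply, this, hj]
  rw [Finset.prod_congr rfl fun j _ => hrow j, Finset.prod_update_of_mem (Finset.mem_univ i),
    mul_comm, Finset.sdiff_singleton_eq_erase]

lemma map_charmatrix (B : Matrix (Fin m) (Fin m) ℂ) (t : ℂ) :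
    (charmatrix B).map (Polynomial.eval t) = t • (1 : Matrix (Fin m) (Fin m) ℂ) - B := by
  ext i j
  by_cases h : i = j
  · subst h; simp [charmatrix_apply_eq, Matrix.one_apply]
  · simp [charmatrix_apply_ne _ _ _ h, Matrix.one_apply, h]

lemma eval_charpoly' (B : Matrix (Fin m) (Fin m) ℂ) (t : ℂ) :
    Polynomial.eval t B.charpoly = Matrix.det (t • (1 : Matrix (Fin m) (Fin m) ℂ) - B) := by
  rw [Matrix.charpoly, map_det_eval, map_charmatrix]

lemma eval_deriv_charpoly (B : Matrix (Fin m) (Fin m) ℂ) (t : ℂ) :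
    Polynomial.eval t (derivative B.charpoly)
      = Matrix.trace (adjugate (t • (1 : Matrix (Fin m) (Fin m) ℂ) - B)) := by
  rw [Matrix.charpoly, det_derivative, eval_finset_sum, Matrix.trace]
  refine Finset.sum_congr rfl fun k _ => ?_
  rw [map_det_eval, map_updateRow, map_charmatrix]
  have hr : (fun j => Polynomial.eval t (derivative (charmatrix B k j))) = Pi.single k 1 := by
    funext j
    by_cases h : k = j
    · subst h; simp [charmatrix_apply_eq]
    · have h' : j ≠ k := fun hc => h hc.symm
      simp [charmatrix_apply_ne _ _ _ h, Pi.single_apply, h']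
  rw [hr, Matrix.diag_apply, Matrix.adjugate_apply]

lemma eval_deriv_prod (s : Multiset ℂ) (t : ℂ)
    (h : Polynomial.eval t ((s.map fun a => X - C a).prod) ≠ 0) :
    Polynomial.eval t (derivative ((s.map fun a => X - C a).prod))
      = Polynomial.eval t ((s.map fun a => X - C a).prod) * (s.map fun a => (t - a)⁻¹).sum := by
  induction s using Multiset.induction_on with
  | empty => simp
  | cons a s ih =>
    simp only [Multiset.map_cons, Multiset.prod_cons, Multiset.sum_cons] at h ⊢
    rw [eval_mul] at h
    have hta : Polynomial.eval t (X - C a) ≠ 0 := left_ne_zero_of_mul h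
    have hq : Polynomial.eval t ((s.map fun a => X - C a).prod) ≠ 0 := right_ne_zero_of_mul h
    have hta' : t - a ≠ 0 := by simpa using hta
    rw [derivative_mul, eval_add, eval_mul, eval_mul, ih hq]
    simp only [derivative_sub, derivative_X, derivative_C, sub_zero, eval_one, eval_sub,
      eval_X, eval_C]
    simp only [eval_mul, eval_sub, eval_X, eval_C]
    field_simp

lemma trace_resolvent (B : Matrix (Fin m) (Fin m) ℂ) (t : ℂ)
    (h : Matrix.det (t • (1 : Matrix (Fin m) (Fin m) ℂ) - B) ≠ 0) :
    Matrix.trace ((t • (1 : Matrix (Fin m) (Fin m) ℂ) - B)⁻¹)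
      = (B.charpoly.roots.map fun a => (t - a)⁻¹).sum := by
  set R := B.charpoly.roots with hR
  have hev : Polynomial.eval t B.charpoly ≠ 0 := by rw [eval_charpoly']; exact h
  have hsplit : B.charpoly = (R.map fun a => X - C a).prod := by
    simpa using Polynomial.Splits.eq_prod_roots_of_monic (IsAlgClosed.splits B.charpoly)
      (Matrix.charpoly_monic B)
  have h2 : Polynomial.eval t (derivative B.charpoly)
      = Polynomial.eval t B.charpoly * (R.map fun a => (t - a)⁻¹).sum := by
    rw [hsplit] at hev ⊢
    exact eval_deriv_prod R t hev
  rw [Matrix.inv_def, Ring.inverse_eq_inv', Matrix.trace_smul, ← eval_deriv_charpoly, h2,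
    ← eval_charpoly', smul_eq_mul, ← mul_assoc, inv_mul_cancel₀ hev, one_mul]

lemma entry_pow_bound (B : Matrix (Fin m) (Fin m) ℂ) :
    ∀ k i j, ‖(B ^ k) i j‖ ≤ (1 + ∑ a, ∑ b, ‖B a b‖) ^ k := by
  have hK0 : (0:ℝ) ≤ ∑ a, ∑ b, ‖B a b‖ :=
    Finset.sum_nonneg fun a _ => Finset.sum_nonneg fun b _ => norm_nonneg _
  have hrow : ∀ i j, ‖B i j‖ ≤ ∑ a, ∑ b, ‖B a b‖ := by
    intro i j
    calc ‖B i j‖ ≤ ∑ b, ‖B i b‖ := Finset.single_le_sum (fun b _ => norm_nonneg _) (mem_univ j)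
    _ ≤ ∑ a, ∑ b, ‖B a b‖ :=
        Finset.single_le_sum (fun a _ => Finset.sum_nonneg fun b _ => norm_nonneg _) (mem_univ i)
  intro k
  induction k with
  | zero =>
    intro i j
    rw [pow_zero, pow_zero]
    by_cases h : i = j
    · subst h; simp [Matrix.one_apply]
    · simp [Matrix.one_apply, h]
  | succ k ih =>
    intro i j
    rw [pow_succ]
    calc ‖(B ^ k * B) i j‖ = ‖∑ l, (B ^ k) i l * B l j‖ := by rw [Matrix.mul_apply]
    _ ≤ ∑ l, ‖(B ^ k) i l * B l j‖ := norm_sum_le _ _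
    _ ≤ ∑ l, (1 + ∑ a, ∑ b, ‖B a b‖) ^ k * ‖B l j‖ := by
        refine Finset.sum_le_sum fun l _ => ?_
        rw [norm_mul]
        exact mul_le_mul_of_nonneg_right (ih i l) (norm_nonneg _)
    _ = (1 + ∑ a, ∑ b, ‖B a b‖) ^ k * ∑ l, ‖B l j‖ := by rw [Finset.mul_sum]
    _ ≤ (1 + ∑ a, ∑ b, ‖B a b‖) ^ k * (1 + ∑ a, ∑ b, ‖B a b‖) := by
        refine mul_le_mul_of_nonneg_left ?_ (by positivity)
        calc ∑ l, ‖B l j‖ ≤ ∑ l, ∑ b, ‖B l b‖ := Finset.sum_le_sum fun l _ =>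
              Finset.single_le_sum (fun b _ => norm_nonneg _) (mem_univ j)
        _ ≤ 1 + ∑ a, ∑ b, ‖B a b‖ := by linarith
    _ = (1 + ∑ a, ∑ b, ‖B a b‖) ^ (k + 1) := by rw [pow_succ]

lemma root_bound (B : Matrix (Fin m) (Fin m) ℂ) {z : ℂ} (hz : z ∈ B.charpoly.roots) :
    ‖z‖ < 1 + ∑ a, ∑ b, ‖B a b‖ := by
  have hK0 : (0:ℝ) ≤ ∑ a, ∑ b, ‖B a b‖ :=
    Finset.sum_nonneg fun a _ => Finset.sum_nonneg fun b _ => norm_nonneg _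
  have hroot : Polynomial.eval z B.charpoly = 0 := by
    have := Polynomial.isRoot_of_mem_roots hz
    simpa [Polynomial.IsRoot] using this
  have hdet : Matrix.det (z • (1 : Matrix (Fin m) (Fin m) ℂ) - B) = 0 := by
    rw [← eval_charpoly']; exact hroot
  obtain ⟨v, hv0, hvec⟩ := (Matrix.exists_mulVec_eq_zero_iff).mpr hdet
  have hBv : B.mulVec v = z • v := by
    have := hvec
    rw [Matrix.sub_mulVec, Matrix.smul_mulVec, Matrix.one_mulVec] at this
    have h2 := sub_eq_zero.mp this
    exact h2.symm
  obtain ⟨i1, hi1⟩ : ∃ i, v i ≠ 0 := Function.ne_iff.mp hv0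
  obtain ⟨i0, -, hmax⟩ := Finset.exists_max_image Finset.univ (fun i => ‖v i‖) ⟨i1, mem_univ i1⟩
  have hvi0 : 0 < ‖v i0‖ := lt_of_lt_of_le (norm_pos_iff.mpr hi1) (hmax i1 (mem_univ i1))
  have hkey : ‖z‖ * ‖v i0‖ ≤ (∑ a, ∑ b, ‖B a b‖) * ‖v i0‖ := by
    have h1 : ‖z‖ * ‖v i0‖ = ‖(B.mulVec v) i0‖ := by
      rw [hBv]; simp [norm_mul]
    rw [h1, Matrix.mulVec, dotProduct]
    calc ‖∑ j, B i0 j * v j‖ ≤ ∑ j, ‖B i0 j * v j‖ := norm_sum_le _ _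
    _ ≤ ∑ j, ‖B i0 j‖ * ‖v i0‖ := Finset.sum_le_sum fun j _ => by
        rw [norm_mul]
        exact mul_le_mul_of_nonneg_left (hmax j (mem_univ j)) (norm_nonneg _)
    _ = (∑ j, ‖B i0 j‖) * ‖v i0‖ := by rw [Finset.sum_mul]
    _ ≤ (∑ a, ∑ b, ‖B a b‖) * ‖v i0‖ := by
        refine mul_le_mul_of_nonneg_right ?_ (le_of_lt hvi0)
        exact Finset.single_le_sum (fun a _ => Finset.sum_nonneg fun b _ => norm_nonneg _)
          (mem_univ i0)
  have := le_of_mul_le_mul_right hkey hvi0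
  linarith

lemma multiset_hasSum {α : Type*} (R : Multiset α) (f : α → ℕ → ℂ) (g : α → ℂ)
    (h : ∀ z ∈ R, HasSum (f z) (g z)) :
    HasSum (fun k => (R.map fun z => f z k).sum) ((R.map g).sum) := by
  induction R using Multiset.induction_on with
  | empty => simpa using hasSum_zero
  | cons a s ih =>
    simp only [Multiset.map_cons, Multiset.sum_cons]
    exact (h a (Multiset.mem_cons_self a s)).add
      (ih fun z hz => h z (Multiset.mem_cons_of_mem hz))

lemma multiset_tendsto {α : Type*} (R : Multiset α) (f : α → ℕ → ℂ) (g : α → ℂ)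
    (h : ∀ z ∈ R, Filter.Tendsto (fun k => f z k) Filter.atTop (nhds (g z))) :
    Filter.Tendsto (fun k => (R.map fun z => f z k).sum) Filter.atTop (nhds ((R.map g).sum)) := by
  induction R using Multiset.induction_on with
  | empty => simpa using tendsto_const_nhds
  | cons a s ih =>
    simp only [Multiset.map_cons, Multiset.sum_cons]
    exact (h a (Multiset.mem_cons_self a s)).add
      (ih fun z hz => h z (Multiset.mem_cons_of_mem hz))

lemma coeff_unique_zero (c : ℕ → ℂ) (s : ℝ) (hs : 0 < s)
    (hsum : Summable fun k => ‖c k‖ * s ^ k)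
    (h : ∀ x : ℝ, 0 < x → x < s → HasSum (fun k => c k * (x : ℂ) ^ k) 0) :
    c 0 = 0 := by
  have hsum1 : Summable fun k => ‖c (k + 1)‖ * s ^ (k + 1) := by
    have := (summable_nat_add_iff (f := fun k => ‖c k‖ * s ^ k) 1).mpr hsum
    exact this
  set T : ℝ := ∑' k, ‖c (k + 1)‖ * s ^ (k + 1) with hT
  have hT0 : 0 ≤ T := tsum_nonneg fun k => by positivity
  have key : ∀ x : ℝ, 0 < x → x < s → ‖c 0‖ ≤ (x / s) * T := by
    intro x hx hxs
    have hx' := h x hx hxs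
    have hshift : HasSum (fun n => c (n + 1) * (x:ℂ) ^ (n + 1)) (-(c 0)) := by
      refine (hasSum_nat_add_iff (f := fun k => c k * (x:ℂ) ^ k) 1).mpr ?_
      simpa using hx'
    have hnorm : Summable fun n => ‖c (n + 1) * (x:ℂ) ^ (n + 1)‖ := by
      refine Summable.of_nonneg_of_le (fun n => norm_nonneg _) (fun n => ?_) hsum1
      rw [norm_mul, norm_pow, Complex.norm_real, Real.norm_eq_abs, abs_of_pos hx]
      exact mul_le_mul_of_nonneg_left (pow_le_pow_left₀ (le_of_lt hx) (le_of_lt hxs) _)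
        (norm_nonneg _)
    have h1 : ‖c 0‖ = ‖∑' n, c (n + 1) * (x:ℂ) ^ (n + 1)‖ := by
      rw [hshift.tsum_eq, norm_neg]
    have h2 : ‖∑' n, c (n + 1) * (x:ℂ) ^ (n + 1)‖ ≤ ∑' n, ‖c (n + 1) * (x:ℂ) ^ (n + 1)‖ :=
      norm_tsum_le_tsum_norm hnorm
    have h3 : ∑' n, ‖c (n + 1) * (x:ℂ) ^ (n + 1)‖
        ≤ ∑' n, (x / s) * (‖c (n + 1)‖ * s ^ (n + 1)) := by
      refine Summable.tsum_le_tsum (fun n => ?_) hnorm (hsum1.mul_left _)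
      rw [norm_mul, norm_pow, Complex.norm_real, Real.norm_eq_abs, abs_of_pos hx]
      have hxp : x ^ (n + 1) ≤ (x / s) * s ^ (n + 1) := by
        have hxn : x ^ n ≤ s ^ n := pow_le_pow_left₀ (le_of_lt hx) (le_of_lt hxs) n
        have h2' : (x / s) * s ^ (n+1) = x * s ^ n := by field_simp; ring
        have h3' : x ^ (n+1) = x * x ^ n := by ring
        rw [h2', h3']
        exact mul_le_mul_of_nonneg_left hxn (le_of_lt hx)
      calc ‖c (n+1)‖ * x ^ (n+1) ≤ ‖c (n+1)‖ * ((x / s) * s ^ (n+1)) :=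
            mul_le_mul_of_nonneg_left hxp (norm_nonneg _)
      _ = (x / s) * (‖c (n+1)‖ * s ^ (n+1)) := by ring
    have h4 : ∑' n, (x / s) * (‖c (n + 1)‖ * s ^ (n + 1)) = (x / s) * T := tsum_mul_left
    calc ‖c 0‖ = _ := h1
    _ ≤ _ := h2
    _ ≤ _ := h3
    _ = _ := h4
  have hlim : Filter.Tendsto (fun x : ℝ => (x / s) * T) (nhdsWithin 0 (Set.Ioi 0)) (nhds 0) := by
    have hc : Continuous fun x : ℝ => (x / s) * T := by continuity
    have := (hc.tendsto 0).mono_left (nhdsWithin_le_nhds (s := Set.Ioi (0:ℝ)))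
    simpa using this
  have hev : ∀ᶠ x in nhdsWithin (0:ℝ) (Set.Ioi 0), ‖c 0‖ ≤ (x / s) * T := by
    filter_upwards [Ioo_mem_nhdsGT_of_mem (Set.mem_Ico.mpr ⟨le_refl 0, hs⟩)] with x hx
    exact key x hx.1 hx.2
  have hle : ‖c 0‖ ≤ 0 := ge_of_tendsto hlim hev
  exact norm_le_zero_iff.mp hle

lemma coeff_unique (s : ℝ) (hs : 0 < s) :
    ∀ (c : ℕ → ℂ), Summable (fun k => ‖c k‖ * s ^ k) →
    (∀ x : ℝ, 0 < x → x < s → HasSum (fun k => c k * (x : ℂ) ^ k) 0) →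
    ∀ k, c k = 0 := by
  intro c hsum h k
  induction k generalizing c with
  | zero => exact coeff_unique_zero c s hs hsum h
  | succ k ih =>
    have hc0 : c 0 = 0 := coeff_unique_zero c s hs hsum h
    have hsum' : Summable fun n => ‖c (n + 1)‖ * s ^ n := by
      have h1 : Summable fun n => ‖c (n + 1)‖ * s ^ (n + 1) := by
        have := (summable_nat_add_iff (f := fun k => ‖c k‖ * s ^ k) 1).mpr hsum
        exact this
      have := h1.mul_left s⁻¹
      refine this.congr fun n => ?_
      field_simp [pow_succ]
      ring
    have h' : ∀ x : ℝ, 0 < x → x < s → HasSum (fun n => c (n + 1) * (x : ℂ) ^ n) 0 := by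
      intro x hx hxs
      have hx' := h x hx hxs
      have hshift : HasSum (fun n => c (n + 1) * (x:ℂ) ^ (n + 1)) 0 := by
        refine (hasSum_nat_add_iff (f := fun k => c k * (x:ℂ) ^ k) 1).mpr ?_
        simpa [hc0] using hx'
      have hxne : (x:ℂ) ≠ 0 := by
        simpa using ne_of_gt hx
      have hmr := hshift.mul_right (x:ℂ)⁻¹
      rw [zero_mul] at hmr
      have heq : (fun n => c (n+1) * (x:ℂ)^(n+1) * (x:ℂ)⁻¹) = fun n => c (n+1) * (x:ℂ)^n := by
        funext n
        field_simp [pow_succ]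
        ring
      rwa [heq] at hmr
    exact ih (fun n => c (n + 1)) hsum' h'

lemma trace_pow_norm_bound (B : Matrix (Fin m) (Fin m) ℂ) (k : ℕ) :
    ‖Matrix.trace (B ^ k)‖ ≤ (m : ℝ) * (1 + ∑ a, ∑ b, ‖B a b‖) ^ k := by
  rw [Matrix.trace]
  calc ‖∑ i, (B ^ k).diag i‖ ≤ ∑ i, ‖(B ^ k).diag i‖ := norm_sum_le _ _
  _ ≤ ∑ _i : Fin m, (1 + ∑ a, ∑ b, ‖B a b‖) ^ k :=
      Finset.sum_le_sum fun i _ => entry_pow_bound B k i i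
  _ = (m : ℝ) * (1 + ∑ a, ∑ b, ‖B a b‖) ^ k := by
      rw [Finset.sum_const, card_univ, Fintype.card_fin, nsmul_eq_mul]

lemma neumann (B : Matrix (Fin m) (Fin m) ℂ) {x : ℝ} (hx : 0 < x)
    (hxK : x < (1 + ∑ a, ∑ b, ‖B a b‖)⁻¹) :
    Matrix.det (1 - (x:ℂ) • B) ≠ 0 ∧
    HasSum (fun k => Matrix.trace (B ^ k) * (x:ℂ) ^ k)
      (Matrix.trace ((1 - (x:ℂ) • B)⁻¹)) := by
  set K : ℝ := 1 + ∑ a, ∑ b, ‖B a b‖ with hKdef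
  have hK1 : (1:ℝ) ≤ K := by
    have : (0:ℝ) ≤ ∑ a, ∑ b, ‖B a b‖ :=
      Finset.sum_nonneg fun a _ => Finset.sum_nonneg fun b _ => norm_nonneg _
    rw [hKdef]; linarith
  have hK0 : (0:ℝ) < K := lt_of_lt_of_le one_pos hK1
  have hxK1 : x * K < 1 := by
    have h := mul_lt_mul_of_pos_right hxK hK0
    rwa [inv_mul_cancel₀ (ne_of_gt hK0)] at h
  have hxK0 : 0 ≤ x * K := by positivity
  set P : ℕ → Matrix (Fin m) (Fin m) ℂ := fun N => ∑ k ∈ Finset.range N, (x:ℂ) ^ k • B ^ k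
    with hPdef
  have hMP : ∀ N, (1 - (x:ℂ) • B) * P N = 1 - ((x:ℂ) ^ N) • B ^ N := by
    intro N
    induction N with
    | zero => simp [hPdef]
    | succ N ih =>
      have hP1 : P (N + 1) = P N + (x:ℂ) ^ N • B ^ N := by
        simp [hPdef, Finset.sum_range_succ]
      rw [hP1, mul_add, ih]
      have h2 : (1 - (x:ℂ) • B) * ((x:ℂ) ^ N • B ^ N)
          = (x:ℂ) ^ N • B ^ N - (x:ℂ) ^ (N + 1) • B ^ (N + 1) := by
        rw [sub_mul, one_mul]
        congr 1
        calc ((x:ℂ) • B) * ((x:ℂ) ^ N • B ^ N) = ((x:ℂ) * (x:ℂ) ^ N) • (B * B ^ N) := by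
              rw [smul_mul_assoc, mul_smul_comm, smul_smul]
        _ = (x:ℂ) ^ (N + 1) • B ^ (N + 1) := by rw [← pow_succ', ← pow_succ']
      rw [h2]
      abel
  have hnorm_entry : ∀ (N : ℕ) i j, ‖((x:ℂ) ^ N • B ^ N : Matrix (Fin m) (Fin m) ℂ) i j‖
      ≤ (x * K) ^ N := by
    intro N i j
    rw [Matrix.smul_apply, smul_eq_mul, norm_mul, norm_pow, Complex.norm_real,
      Real.norm_eq_abs, abs_of_pos hx, mul_pow]
    exact mul_le_mul_of_nonneg_left (entry_pow_bound B N i j) (by positivity)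
  have htend0 : Filter.Tendsto (fun N => (1 : Matrix (Fin m) (Fin m) ℂ) - (x:ℂ) ^ N • B ^ N)
      Filter.atTop (nhds 1) := by
    have h1 : Filter.Tendsto (fun N => ((x:ℂ) ^ N • B ^ N : Matrix (Fin m) (Fin m) ℂ))
        Filter.atTop (nhds 0) := by
      refine tendsto_pi_nhds.mpr ?_
      intro i
      rw [tendsto_pi_nhds]
      intro j
      have : Filter.Tendsto (fun N : ℕ => (x * K) ^ N) Filter.atTop (nhds 0) :=
        tendsto_pow_atTop_nhds_zero_of_lt_one hxK0 hxK1
      exact squeeze_zero_norm (fun N => hnorm_entry N i j) this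
    have hsub : Filter.Tendsto (fun N : ℕ => (1 : Matrix (Fin m) (Fin m) ℂ) - (x:ℂ) ^ N • B ^ N)
        Filter.atTop (nhds (1 - 0)) := Filter.Tendsto.sub tendsto_const_nhds h1
    simpa using hsub
  have hdetcont : Continuous fun M : Matrix (Fin m) (Fin m) ℂ => M.det :=
    Continuous.matrix_det continuous_id
  have hdet1 : Filter.Tendsto (fun N => Matrix.det (1 - (x:ℂ) ^ N • B ^ N))
      Filter.atTop (nhds 1) := by
    have := (hdetcont.tendsto 1).comp htend0
    simpa [Function.comp_def] using this
  have hdet : Matrix.det (1 - (x:ℂ) • B) ≠ 0 := by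
    intro h0
    have hconst : (fun N => Matrix.det ((1 : Matrix (Fin m) (Fin m) ℂ) - (x:ℂ) ^ N • B ^ N))
        = fun _ => (0:ℂ) := by
      funext N
      rw [← hMP N, Matrix.det_mul, h0, zero_mul]
    rw [hconst] at hdet1
    exact one_ne_zero (tendsto_nhds_unique hdet1 tendsto_const_nhds)
  refine ⟨hdet, ?_⟩
  set M : Matrix (Fin m) (Fin m) ℂ := 1 - (x:ℂ) • B with hMdef
  have hMunit : IsUnit M.det := isUnit_iff_ne_zero.mpr hdet
  have hP : ∀ N, P N = M⁻¹ - (x:ℂ) ^ N • (M⁻¹ * B ^ N) := by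
    intro N
    have h1 : M⁻¹ * (M * P N) = P N := by
      rw [← mul_assoc, Matrix.nonsing_inv_mul M hMunit, one_mul]
    rw [← h1, hMP N, mul_sub, mul_one, mul_smul_comm]
  have htr : ∀ N, Matrix.trace (P N) = ∑ k ∈ Finset.range N, Matrix.trace (B ^ k) * (x:ℂ) ^ k := by
    intro N
    rw [hPdef]
    rw [Matrix.trace_sum]
    refine Finset.sum_congr rfl fun k _ => ?_
    rw [Matrix.trace_smul, smul_eq_mul, mul_comm]
  -- bound for the tail
  set CM : ℝ := ∑ i, ∑ l, ‖M⁻¹ i l‖ with hCM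
  have htail : ∀ N, ‖(x:ℂ) ^ N * Matrix.trace (M⁻¹ * B ^ N)‖ ≤ CM * (x * K) ^ N := by
    intro N
    rw [norm_mul, norm_pow, Complex.norm_real, Real.norm_eq_abs, abs_of_pos hx]
    have h1 : ‖Matrix.trace (M⁻¹ * B ^ N)‖ ≤ CM * K ^ N := by
      rw [Matrix.trace]
      calc ‖∑ i, (M⁻¹ * B ^ N).diag i‖ ≤ ∑ i, ‖(M⁻¹ * B ^ N) i i‖ := norm_sum_le _ _
      _ ≤ ∑ i, ∑ l, ‖M⁻¹ i l‖ * K ^ N := by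
          refine Finset.sum_le_sum fun i _ => ?_
          rw [Matrix.mul_apply]
          calc ‖∑ l, M⁻¹ i l * (B ^ N) l i‖ ≤ ∑ l, ‖M⁻¹ i l * (B ^ N) l i‖ := norm_sum_le _ _
          _ ≤ ∑ l, ‖M⁻¹ i l‖ * K ^ N := Finset.sum_le_sum fun l _ => by
              rw [norm_mul]
              exact mul_le_mul_of_nonneg_left (entry_pow_bound B N l i) (norm_nonneg _)
      _ = CM * K ^ N := by
          rw [hCM, Finset.sum_mul]
          exact Finset.sum_congr rfl fun i _ => (Finset.sum_mul _ _ _).symm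
    calc x ^ N * ‖Matrix.trace (M⁻¹ * B ^ N)‖
        ≤ x ^ N * (CM * K ^ N) := mul_le_mul_of_nonneg_left h1 (by positivity)
      _ = CM * (x * K) ^ N := by rw [mul_pow]; ring
  have htailtend : Filter.Tendsto (fun N => (x:ℂ) ^ N * Matrix.trace (M⁻¹ * B ^ N))
      Filter.atTop (nhds 0) := by
    have hg : Filter.Tendsto (fun N : ℕ => CM * (x * K) ^ N) Filter.atTop (nhds 0) := by
      have := (tendsto_pow_atTop_nhds_zero_of_lt_one hxK0 hxK1).const_mul CM
      simpa using this
    exact squeeze_zero_norm htail hg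
  have hPtend : Filter.Tendsto (fun N => Matrix.trace (P N)) Filter.atTop
      (nhds (Matrix.trace M⁻¹)) := by
    have : (fun N => Matrix.trace (P N))
        = fun N => Matrix.trace M⁻¹ - (x:ℂ) ^ N * Matrix.trace (M⁻¹ * B ^ N) := by
      funext N
      rw [hP N, Matrix.trace_sub, Matrix.trace_smul, smul_eq_mul]
    rw [this]
    have hsub : Filter.Tendsto
        (fun N : ℕ => Matrix.trace M⁻¹ - (x:ℂ) ^ N * Matrix.trace (M⁻¹ * B ^ N))
        Filter.atTop (nhds (Matrix.trace M⁻¹ - 0)) := Filter.Tendsto.sub tendsto_const_nhds htailtend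
    simpa using hsub
  have hsummable : Summable fun k => Matrix.trace (B ^ k) * (x:ℂ) ^ k := by
    refine Summable.of_norm_bounded (g := fun k => (m : ℝ) * (x * K) ^ k) ?_ ?_
    · have := (summable_geometric_of_lt_one hxK0 hxK1).mul_left (m : ℝ)
      exact this
    · intro k
      show ‖Matrix.trace (B ^ k) * (x:ℂ) ^ k‖ ≤ (m : ℝ) * (x * K) ^ k
      rw [norm_mul, norm_pow, Complex.norm_real, Real.norm_eq_abs, abs_of_pos hx, mul_pow]
      calc ‖Matrix.trace (B ^ k)‖ * x ^ k ≤ ((m:ℝ) * K ^ k) * x ^ k :=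
            mul_le_mul_of_nonneg_right (trace_pow_norm_bound B k) (by positivity)
      _ = (m:ℝ) * (x ^ k * K ^ k) := by ring
  rw [hsummable.hasSum_iff_tendsto_nat]
  have : (fun N => ∑ k ∈ Finset.range N, Matrix.trace (B ^ k) * (x:ℂ) ^ k)
      = fun N => Matrix.trace (P N) := by
    funext N; rw [htr N]
  rw [this]
  exact hPtend

lemma multiset_norm_sum_le (R : Multiset ℂ) (C : ℝ) (h : ∀ z ∈ R, ‖z‖ ≤ C) :
    ‖R.sum‖ ≤ R.card * C := by
  induction R using Multiset.induction_on with
  | empty =>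
    simp
  | cons a s ih =>
    have ha := h a (Multiset.mem_cons_self a s)
    have hs := ih fun z hz => h z (Multiset.mem_cons_of_mem hz)
    rw [Multiset.sum_cons, Multiset.card_cons]
    calc ‖a + s.sum‖ ≤ ‖a‖ + ‖s.sum‖ := norm_add_le _ _
    _ ≤ C + s.card * C := add_le_add ha hs
    _ = (s.card + 1) * C := by ring
    _ = ((s.card + 1 : ℕ) : ℝ) * C := by push_cast; ring

lemma bridge (B : Matrix (Fin m) (Fin m) ℂ) (k : ℕ) :
    Matrix.trace (B ^ k) = (B.charpoly.roots.map (· ^ k)).sum := by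
  set K : ℝ := 1 + ∑ a, ∑ b, ‖B a b‖ with hKdef
  have hS0 : (0:ℝ) ≤ ∑ a, ∑ b, ‖B a b‖ :=
    Finset.sum_nonneg fun a _ => Finset.sum_nonneg fun b _ => norm_nonneg _
  have hK1 : (1:ℝ) ≤ K := by rw [hKdef]; linarith
  have hK0 : (0:ℝ) < K := lt_of_lt_of_le one_pos hK1
  set R := B.charpoly.roots with hR
  have hrootK : ∀ z ∈ R, ‖z‖ ≤ K := fun z hz => le_of_lt (root_bound B hz)
  set c : ℕ → ℂ := fun k => Matrix.trace (B ^ k) - (R.map (· ^ k)).sum with hc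
  have hzero : ∀ k, c k = 0 := by
    apply coeff_unique ((2 * K)⁻¹) (by positivity)
    · -- summability
      have hgeo : Summable fun k : ℕ => ((m : ℝ) + R.card) * (2⁻¹ : ℝ) ^ k :=
        (summable_geometric_of_lt_one (by norm_num) (by norm_num)).mul_left _
      refine Summable.of_nonneg_of_le (fun k => by positivity) (fun k => ?_) hgeo
      have hbound : ‖c k‖ ≤ ((m : ℝ) + R.card) * K ^ k := by
        rw [hc]
        calc ‖Matrix.trace (B ^ k) - (R.map (· ^ k)).sum‖
            ≤ ‖Matrix.trace (B ^ k)‖ + ‖(R.map (· ^ k)).sum‖ := norm_sub_le _ _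
        _ ≤ (m : ℝ) * K ^ k + (R.card : ℝ) * K ^ k := by
            refine add_le_add (trace_pow_norm_bound B k) ?_
            have := multiset_norm_sum_le (R.map (· ^ k)) (K ^ k) ?_
            · rw [Multiset.card_map] at this
              exact this
            · intro a ha
              rw [Multiset.mem_map] at ha
              obtain ⟨z, hz, rfl⟩ := ha
              rw [norm_pow]
              exact pow_le_pow_left₀ (norm_nonneg _) (hrootK z hz) k
        _ = ((m : ℝ) + R.card) * K ^ k := by ring
      calc ‖c k‖ * ((2 * K)⁻¹) ^ k ≤ (((m : ℝ) + R.card) * K ^ k) * ((2 * K)⁻¹) ^ k :=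
            mul_le_mul_of_nonneg_right hbound (by positivity)
      _ = ((m : ℝ) + R.card) * (2⁻¹ : ℝ) ^ k := by
          have h5 : K * (2 * K)⁻¹ = (2⁻¹ : ℝ) := by
            rw [mul_inv, ← mul_assoc, mul_comm K, mul_assoc, mul_inv_cancel₀ (ne_of_gt hK0),
              mul_one]
          rw [mul_assoc, ← mul_pow, h5]
    · intro x hx hxs
      have hxK : x < K⁻¹ := by
        refine lt_of_lt_of_le hxs ?_
        rw [mul_inv]
        calc (2:ℝ)⁻¹ * K⁻¹ ≤ 1 * K⁻¹ := by
              refine mul_le_mul_of_nonneg_right (by norm_num) (by positivity)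
        _ = K⁻¹ := one_mul _
      obtain ⟨hdet, hsum1⟩ := neumann B hx hxK
      have hxne : (x:ℂ) ≠ 0 := by
        simpa using ne_of_gt hx
      set t : ℂ := (x:ℂ)⁻¹ with ht
      have hxt : (x:ℂ) * t = 1 := mul_inv_cancel₀ hxne
      have hMN : (1 : Matrix (Fin m) (Fin m) ℂ) - (x:ℂ) • B
          = (x:ℂ) • (t • (1 : Matrix (Fin m) (Fin m) ℂ) - B) := by
        rw [smul_sub, smul_smul, hxt, one_smul]
      have hdetN : Matrix.det (t • (1 : Matrix (Fin m) (Fin m) ℂ) - B) ≠ 0 := by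
        intro h0
        rw [hMN, Matrix.det_smul, h0, mul_zero] at hdet
        exact hdet rfl
      have hNinv : (t • (1 : Matrix (Fin m) (Fin m) ℂ) - B)⁻¹
          = (x:ℂ) • ((1 : Matrix (Fin m) (Fin m) ℂ) - (x:ℂ) • B)⁻¹ := by
        refine Matrix.inv_eq_right_inv ?_
        rw [Matrix.mul_smul, ← Matrix.smul_mul, ← hMN,
          Matrix.mul_nonsing_inv _ (isUnit_iff_ne_zero.mpr hdet)]
      have h2 : Matrix.trace (((1 : Matrix (Fin m) (Fin m) ℂ) - (x:ℂ) • B)⁻¹)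
          = (R.map fun a => (1 - a * (x:ℂ))⁻¹).sum := by
        have h3 := trace_resolvent B t hdetN
        rw [hNinv, Matrix.trace_smul, smul_eq_mul] at h3
        have h4 : Matrix.trace (((1 : Matrix (Fin m) (Fin m) ℂ) - (x:ℂ) • B)⁻¹)
            = (x:ℂ)⁻¹ * (R.map fun a => (t - a)⁻¹).sum := by
          field_simp at h3 ⊢
          rw [mul_comm] at h3
          rw [mul_comm]
          exact h3
        rw [h4, ← Multiset.sum_map_mul_left]
        congr 1
        refine Multiset.map_congr rfl fun z hz => ?_
        rw [← mul_inv]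
        congr 1
        rw [mul_sub, hxt]
        ring
      have hsum2 : HasSum (fun k => (R.map (· ^ k)).sum * (x:ℂ) ^ k)
          (Matrix.trace (((1 : Matrix (Fin m) (Fin m) ℂ) - (x:ℂ) • B)⁻¹)) := by
        rw [h2]
        have hgeom : ∀ z ∈ R, HasSum (fun k => z ^ k * (x:ℂ) ^ k) ((1 - z * (x:ℂ))⁻¹) := by
          intro z hz
          have hlt : ‖z * (x:ℂ)‖ < 1 := by
            rw [norm_mul, Complex.norm_real, Real.norm_eq_abs, abs_of_pos hx]
            calc ‖z‖ * x ≤ K * x := mul_le_mul_of_nonneg_right (hrootK z hz) (le_of_lt hx)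
            _ < K * K⁻¹ := by exact mul_lt_mul_of_pos_left hxK hK0
            _ = 1 := mul_inv_cancel₀ (ne_of_gt hK0)
          simpa [mul_pow] using hasSum_geometric_of_norm_lt_one hlt
        have hms := multiset_hasSum R (fun z k => z ^ k * (x:ℂ) ^ k)
          (fun z => (1 - z * (x:ℂ))⁻¹) hgeom
        have hfun : (fun k => (R.map (· ^ k)).sum * (x:ℂ) ^ k)
            = fun k => (R.map fun z => z ^ k * (x:ℂ) ^ k).sum := by
          funext k
          rw [← Multiset.sum_map_mul_right]
        rw [hfun]
        exact hms
      have hdiff := hsum1.sub hsum2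
      rw [sub_self] at hdiff
      have hfun2 : (fun k => c k * (x:ℂ) ^ k)
          = fun k => Matrix.trace (B ^ k) * (x:ℂ) ^ k - (R.map (· ^ k)).sum * (x:ℂ) ^ k := by
        funext k
        rw [hc]
        ring
      rw [hfun2]
      exact hdiff
  have hz := hzero k
  simp only [hc] at hz
  exact sub_eq_zero.mp hz

lemma strictMono_add_le (φ : ℕ → ℕ) (hφ : StrictMono φ) : ∀ a b, φ a + b ≤ φ (a + b) := by
  intro a b
  induction b with
  | zero => simp
  | succ b ih =>
    have h2 : φ (a + b) < φ (a + (b + 1)) := hφ (by omega)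
    omega

lemma list_circle (l : List ℂ) (hne : l ≠ []) (hu : ∀ z ∈ l, ‖z‖ = 1)
    (h : Filter.Tendsto (fun k => (l.map (fun z => z ^ k)).sum) Filter.atTop (nhds 0)) :
    False := by
  classical
  set n := l.length with hn
  have hnpos : 0 < n := List.length_pos_iff.mpr hne
  set u : ℕ → (Fin n → ℂ) := fun k i => (l.get i) ^ k with hu'
  have hb : ∀ k, u k ∈ Metric.closedBall (0 : Fin n → ℂ) 1 := by
    intro k
    rw [Metric.mem_closedBall, dist_zero_right]
    refine (pi_norm_le_iff_of_nonneg zero_le_one).mpr fun i => ?_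
    rw [norm_pow, hu _ (l.get_mem i), one_pow]
  obtain ⟨L, -, φ, hφ, hconv⟩ :=
    tendsto_subseq_of_bounded Metric.isBounded_closedBall hb
  have hcoord : ∀ i : Fin n, Filter.Tendsto (fun j => (l.get i) ^ (φ j)) Filter.atTop (nhds (L i)) := by
    intro i
    exact (tendsto_pi_nhds.mp hconv) i
  have hLnorm : ∀ i : Fin n, ‖L i‖ = 1 := by
    intro i
    have h1 : Filter.Tendsto (fun j => ‖(l.get i) ^ (φ j)‖) Filter.atTop (nhds ‖L i‖) :=
      (hcoord i).norm
    have h2 : (fun j => ‖(l.get i) ^ (φ j)‖) = fun _ => (1:ℝ) := by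
      funext j
      rw [norm_pow, hu _ (l.get_mem i), one_pow]
    rw [h2] at h1
    exact tendsto_nhds_unique h1 tendsto_const_nhds
  have hLne : ∀ i : Fin n, L i ≠ 0 := fun i => by
    intro h0
    have := hLnorm i
    rw [h0] at this
    simp at this
  set ψ : ℕ → ℕ := fun j => φ (2 * j) - φ j with hψ
  have hψge : ∀ j, j ≤ ψ j := by
    intro j
    have h1 : φ j + j ≤ φ (j + j) := strictMono_add_le φ hφ j j
    have h2 : j + j = 2 * j := by ring
    rw [h2] at h1
    show j ≤ φ (2 * j) - φ j
    omega
  have hψtop : Filter.Tendsto ψ Filter.atTop Filter.atTop :=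
    tendsto_atTop_mono hψge tendsto_id
  have hzne : ∀ i : Fin n, (l.get i) ≠ 0 := by
    intro i h0
    have := hu _ (l.get_mem i)
    rw [h0] at this
    simp at this
  have hcoordψ : ∀ i : Fin n, Filter.Tendsto (fun j => (l.get i) ^ (ψ j)) Filter.atTop (nhds 1) := by
    intro i
    have h2j : Filter.Tendsto (fun j => (l.get i) ^ (φ (2 * j))) Filter.atTop (nhds (L i)) := by
      have hmul : Filter.Tendsto (fun j : ℕ => 2 * j) Filter.atTop Filter.atTop :=
        Filter.tendsto_atTop_atTop_of_monotone (fun a b hab => by omega) (fun b => ⟨b, by omega⟩)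
      exact (hcoord i).comp hmul
    have hdiv : Filter.Tendsto (fun j => (l.get i) ^ (φ (2 * j)) / (l.get i) ^ (φ j))
        Filter.atTop (nhds (L i / L i)) := h2j.div (hcoord i) (hLne i)
    rw [div_self (hLne i)] at hdiv
    have heq : (fun j => (l.get i) ^ (φ (2 * j)) / (l.get i) ^ (φ j))
        = fun j => (l.get i) ^ (ψ j) := by
      funext j
      rw [hψ]
      rw [pow_sub₀ _ (hzne i) (hφ.monotone (by omega : j ≤ 2 * j)), div_eq_mul_inv]
    rw [heq] at hdiv
    exact hdiv
  have hsum : Filter.Tendsto (fun j => (l.map (fun z => z ^ (ψ j))).sum)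
      Filter.atTop (nhds (n : ℂ)) := by
    have hl : ∀ j, (l.map (fun z => z ^ (ψ j))).sum = ∑ i : Fin n, (l.get i) ^ (ψ j) := by
      intro j
      conv_lhs => rw [← List.ofFn_get l]
      rw [List.map_ofFn, List.sum_ofFn]
      simp
      rfl
    have : Filter.Tendsto (fun j => ∑ i : Fin n, (l.get i) ^ (ψ j)) Filter.atTop
        (nhds (∑ _i : Fin n, (1:ℂ))) := tendsto_finset_sum _ fun i _ => hcoordψ i
    simp only [Finset.sum_const, card_univ, Fintype.card_fin, nsmul_eq_mul, mul_one] at this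
    rw [funext hl]
    exact this
  have hzero : Filter.Tendsto (fun j => (l.map (fun z => z ^ (ψ j))).sum)
      Filter.atTop (nhds 0) := h.comp hψtop
  have hne0 : (n : ℂ) ≠ 0 := Nat.cast_ne_zero.mpr (by omega)
  exact hne0 (tendsto_nhds_unique hsum hzero)

lemma exists_delta (R : Multiset ℂ) (ρ : ℝ) (hρ : 0 < ρ)
    (h : ∀ z ∈ R, z ≠ (ρ : ℂ) ∧ ‖z‖ ≤ ρ) :
    ∃ δ : ℝ, 0 < δ ∧ ∀ z ∈ R, ∀ x ∈ Set.Icc (0:ℝ) ρ⁻¹, δ ≤ ‖1 - z * (x:ℂ)‖ := by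
  induction R using Multiset.induction_on with
  | empty => exact ⟨1, one_pos, by simp⟩
  | cons a s ih =>
    obtain ⟨δ, hδ, hs'⟩ := ih fun z hz => h z (Multiset.mem_cons_of_mem hz)
    have ha := h a (Multiset.mem_cons_self a s)
    have hcont : ContinuousOn (fun x : ℝ => ‖1 - a * (x:ℂ)‖) (Set.Icc 0 ρ⁻¹) := by
      fun_prop
    obtain ⟨x₀, hx₀, hmin⟩ := isCompact_Icc.exists_isMinOn
      (Set.nonempty_Icc.mpr (by positivity)) hcont
    have hpos : 0 < ‖1 - a * (x₀:ℂ)‖ := by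
      rw [norm_pos_iff]
      intro hz
      have hax : a * (x₀:ℂ) = 1 := (sub_eq_zero.mp hz).symm
      have hx0pos : 0 < x₀ := by
        rcases hx₀.1.lt_or_eq with h1 | h1
        · exact h1
        · exfalso
          rw [← h1] at hax
          simp at hax
      have ha2 : a = ((x₀:ℝ):ℂ)⁻¹ := eq_inv_of_mul_eq_one_left hax
      have habs : ‖a‖ = x₀⁻¹ := by
        rw [ha2, norm_inv, Complex.norm_real, Real.norm_eq_abs, abs_of_pos hx0pos]
      have h7 : ρ ≤ x₀⁻¹ := by
        rw [← inv_inv ρ]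
        exact inv_anti₀ hx0pos hx₀.2
      have h8 : x₀⁻¹ = ρ := le_antisymm (habs ▸ ha.2) h7
      exact ha.1 (by rw [ha2, ← Complex.ofReal_inv, h8])
    refine ⟨min δ ‖1 - a * (x₀:ℂ)‖, lt_min hδ hpos, ?_⟩
    intro z hz x hx
    rcases Multiset.mem_cons.mp hz with rfl | hzs
    · exact le_trans (min_le_right _ _) (hmin hx)
    · exact le_trans (min_le_left _ _) (hs' z hzs x hx)

lemma main_nonneg (B : Matrix (Fin m) (Fin m) ℝ) (hB : ∀ i j, 0 ≤ B i j)
    (i₀ : Fin m) (hc : 0 < B i₀ i₀) :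
    0 < specRad B ∧ ((specRad B : ℂ) ∈ specM B) := by
  classical
  set B' : Matrix (Fin m) (Fin m) ℂ := B.map Complex.ofReal with hB'def
  have hspecM : specM B = B'.charpoly.roots := rfl
  -- powers commute with map
  have hpow : ∀ k : ℕ, B' ^ k = (B ^ k).map Complex.ofReal := by
    intro k
    induction k with
    | zero =>
      simp only [pow_zero]
      ext i j
      by_cases h : i = j
      · subst h; simp [Matrix.one_apply, Matrix.map_apply]
      · simp [Matrix.one_apply, Matrix.map_apply, h]
    | succ k ih =>
      rw [pow_succ, pow_succ, ih]
      ext i j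
      simp [Matrix.mul_apply, Matrix.map_apply, hB'def]
  have htrace : ∀ M : Matrix (Fin m) (Fin m) ℝ,
      Matrix.trace (M.map Complex.ofReal) = ((Matrix.trace M : ℝ) : ℂ) := by
    intro M
    simp [Matrix.trace, Matrix.diag, Matrix.map_apply]
  -- entries of powers are nonneg
  have hBk : ∀ k i j, 0 ≤ (B ^ k) i j := by
    intro k
    induction k with
    | zero =>
      intro i j
      by_cases h : i = j
      · subst h; simp [Matrix.one_apply]
      · simp [Matrix.one_apply, h]
    | succ k ih =>
      intro i j
      rw [pow_succ, Matrix.mul_apply]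
      exact Finset.sum_nonneg fun l _ => mul_nonneg (ih i l) (hB l j)
  set pk : ℕ → ℝ := fun k => Matrix.trace (B ^ k) with hpk
  have hpk0 : ∀ k, 0 ≤ pk k := by
    intro k
    rw [hpk]
    exact Finset.sum_nonneg fun i _ => hBk k i i
  have hbridge : ∀ k, ((specM B).map (· ^ k)).sum = ((pk k : ℝ) : ℂ) := by
    intro k
    rw [hspecM, ← bridge B' k, hpow k, htrace]
  -- the set S
  set S : Set ℝ := (fun z : ℂ => ‖z‖) '' {z : ℂ | z ∈ specM B} with hS
  have hradS : specRad B = sSup S := by rw [hS]; rfl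
  have hSfin : S.Finite := (Multiset.finite_toSet (specM B)).image _
  have hdeg : B'.charpoly.natDegree = m := by
    rw [Matrix.charpoly_natDegree_eq_dim]
    simp
  have hcard : Multiset.card (specM B) = m := by
    rw [hspecM, (Polynomial.splits_iff_card_roots).mp (IsAlgClosed.splits _), hdeg]
  have hmpos : 0 < m := i₀.pos
  have hRne : ∃ z, z ∈ specM B := by
    refine Multiset.exists_mem_of_ne_zero fun h0 => ?_
    rw [h0] at hcard
    simp at hcard
    omega
  obtain ⟨zw, hzw⟩ := hRne
  have hSne : S.Nonempty := ⟨‖zw‖, ⟨zw, hzw, rfl⟩⟩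
  have hbdd : BddAbove S := hSfin.bddAbove
  have hub : ∀ z ∈ specM B, ‖z‖ ≤ specRad B := fun z hz =>
    le_csSup hbdd ⟨z, hz, rfl⟩
  obtain ⟨z₀, hz₀mem, hz₀⟩ : ∃ z₀ ∈ specM B, ‖z₀‖ = specRad B := by
    have h1 : sSup S ∈ S := hSne.csSup_mem hSfin
    rw [hS] at h1
    obtain ⟨z₀, hmem, heq⟩ := h1
    exact ⟨z₀, hmem, by rw [hradS]; exact heq⟩
  set ρ : ℝ := specRad B with hρdef
  -- positivity
  have htrB : B i₀ i₀ ≤ Matrix.trace B := by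
    rw [Matrix.trace]
    exact Finset.single_le_sum (fun i _ => hB i i) (mem_univ i₀)
  have htrB' : Matrix.trace B ≤ (m : ℝ) * ρ := by
    have h1 : ((Matrix.trace B : ℝ) : ℂ) = (specM B).sum := by
      rw [← htrace, hspecM, Matrix.trace_eq_sum_roots_charpoly]
    have h2 : ‖((Matrix.trace B : ℝ) : ℂ)‖ ≤ (Multiset.card (specM B) : ℝ) * ρ := by
      rw [h1]
      refine multiset_norm_sum_le _ _ fun z hz => ?_
      exact hub z hz
    rw [Complex.norm_real, Real.norm_eq_abs, hcard] at h2
    calc Matrix.trace B ≤ |Matrix.trace B| := le_abs_self _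
    _ ≤ (m : ℝ) * ρ := h2
  have hρpos : 0 < ρ := by
    by_contra hneg
    push_neg at hneg
    have : (m : ℝ) * ρ ≤ 0 := mul_nonpos_of_nonneg_of_nonpos (by positivity) hneg
    linarith
  refine ⟨hρpos, ?_⟩
  by_contra hcon
  obtain ⟨δ, hδ, hδb⟩ := exists_delta (specM B) ρ hρpos fun z hz =>
    ⟨fun he => hcon (he ▸ hz), hub z hz⟩
  set c : ℂ := ((ρ⁻¹ : ℝ) : ℂ) with hcdef
  -- partial sums bounded
  have hpartial : ∀ x : ℝ, 0 < x → x < ρ⁻¹ →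
      ∀ N, ∑ k ∈ Finset.range N, pk k * x ^ k ≤ (m : ℝ) * δ⁻¹ := by
    intro x hx hxρ N
    have hgeom : ∀ z ∈ specM B, HasSum (fun k => z ^ k * (x:ℂ) ^ k) ((1 - z * (x:ℂ))⁻¹) := by
      intro z hz
      have hlt : ‖z * (x:ℂ)‖ < 1 := by
        rw [norm_mul, Complex.norm_real, Real.norm_eq_abs, abs_of_pos hx]
        calc ‖z‖ * x ≤ ρ * x := mul_le_mul_of_nonneg_right (hub z hz) (le_of_lt hx)
        _ < ρ * ρ⁻¹ := mul_lt_mul_of_pos_left hxρ hρpos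
        _ = 1 := mul_inv_cancel₀ (ne_of_gt hρpos)
      simpa [mul_pow] using hasSum_geometric_of_norm_lt_one hlt
    have hms := multiset_hasSum (specM B) (fun z k => z ^ k * (x:ℂ) ^ k)
      (fun z => (1 - z * (x:ℂ))⁻¹) hgeom
    have hfun : (fun k => ((specM B).map fun z => z ^ k * (x:ℂ) ^ k).sum)
        = fun k => (((pk k * x ^ k : ℝ)) : ℂ) := by
      funext k
      rw [Multiset.sum_map_mul_right, hbridge k]
      push_cast
      ring
    rw [hfun] at hms
    have hre := hms.mapL Complex.reCLM
    simp only [Complex.reCLM_apply, Complex.ofReal_re] at hre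
    have hL : (((specM B).map fun z => (1 - z * (x:ℂ))⁻¹).sum).re ≤ (m : ℝ) * δ⁻¹ := by
      calc (((specM B).map fun z => (1 - z * (x:ℂ))⁻¹).sum).re
          ≤ ‖((specM B).map fun z => (1 - z * (x:ℂ))⁻¹).sum‖ := Complex.re_le_norm _
      _ ≤ (Multiset.card ((specM B).map fun z => (1 - z * (x:ℂ))⁻¹) : ℝ) * δ⁻¹ := by
          refine multiset_norm_sum_le _ _ fun w hw => ?_
          rw [Multiset.mem_map] at hw
          obtain ⟨z, hz, rfl⟩ := hw
          rw [norm_inv]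
          refine inv_anti₀ hδ (hδb z hz x ⟨le_of_lt hx, le_of_lt hxρ⟩)
      _ = (m : ℝ) * δ⁻¹ := by rw [Multiset.card_map, hcard]
    calc ∑ k ∈ Finset.range N, pk k * x ^ k
        ≤ (((specM B).map fun z => (1 - z * (x:ℂ))⁻¹).sum).re :=
          sum_le_hasSum _ (fun k _ => mul_nonneg (hpk0 k) (pow_nonneg (le_of_lt hx) k)) hre
    _ ≤ (m : ℝ) * δ⁻¹ := hL
  -- limit x → ρ⁻¹
  have hlimN : ∀ N, ∑ k ∈ Finset.range N, pk k * (ρ⁻¹) ^ k ≤ (m : ℝ) * δ⁻¹ := by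
    intro N
    set x : ℕ → ℝ := fun j => ρ⁻¹ - ρ⁻¹ / (j + 2) with hxdef
    have hxpos : ∀ j, 0 < x j := by
      intro j
      have h1 : ρ⁻¹ / ((j : ℝ) + 2) < ρ⁻¹ := div_lt_self (inv_pos.mpr hρpos)
        (by have := Nat.cast_nonneg (α := ℝ) j; linarith)
      simp only [hxdef]
      linarith
    have hxlt : ∀ j, x j < ρ⁻¹ := by
      intro j
      have h1 : 0 < ρ⁻¹ / ((j : ℝ) + 2) := div_pos (inv_pos.mpr hρpos) (by positivity)
      simp only [hxdef]
      linarith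
    have hxtend : Filter.Tendsto x Filter.atTop (nhds ρ⁻¹) := by
      have hj : Filter.Tendsto (fun j : ℕ => (j : ℝ) + 2) Filter.atTop Filter.atTop :=
        Filter.tendsto_atTop_add_const_right _ 2 tendsto_natCast_atTop_atTop
      have h1 : Filter.Tendsto (fun j : ℕ => ρ⁻¹ / ((j : ℝ) + 2)) Filter.atTop (nhds 0) :=
        Filter.Tendsto.div_atTop tendsto_const_nhds hj
      have := Filter.Tendsto.sub (tendsto_const_nhds (x := ρ⁻¹) (f := Filter.atTop (α := ℕ))) h1
      simpa using this
    have hFcont : Continuous fun y : ℝ => ∑ k ∈ Finset.range N, pk k * y ^ k :=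
      continuous_finset_sum _ fun k _ => (continuous_const.mul (continuous_pow k))
    have hFt : Filter.Tendsto (fun j => ∑ k ∈ Finset.range N, pk k * (x j) ^ k)
        Filter.atTop (nhds (∑ k ∈ Finset.range N, pk k * (ρ⁻¹) ^ k)) :=
      (hFcont.tendsto _).comp hxtend
    exact le_of_tendsto hFt (Filter.Eventually.of_forall fun j =>
      hpartial (x j) (hxpos j) (hxlt j) N)
  have hsummable : Summable fun k => pk k * (ρ⁻¹) ^ k :=
    summable_of_sum_range_le
      (fun k => mul_nonneg (hpk0 k) (pow_nonneg (le_of_lt (inv_pos.mpr hρpos)) k)) hlimN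
  have hq0 : Filter.Tendsto (fun k => pk k * (ρ⁻¹) ^ k) Filter.atTop (nhds 0) :=
    hsummable.tendsto_atTop_zero
  -- complex version
  have hcomplex : Filter.Tendsto (fun k => ((specM B).map fun z => (z * c) ^ k).sum)
      Filter.atTop (nhds 0) := by
    have hid : (fun k => ((specM B).map fun z => (z * c) ^ k).sum)
        = fun k => (((pk k * (ρ⁻¹) ^ k : ℝ)) : ℂ) := by
      funext k
      have : ((specM B).map fun z => (z * c) ^ k) = (specM B).map fun z => z ^ k * c ^ k := by
        refine Multiset.map_congr rfl fun z hz => ?_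
        rw [mul_pow]
      rw [this, Multiset.sum_map_mul_right, hbridge k, hcdef]
      push_cast
      ring
    rw [hid]
    have h2 := (Complex.continuous_ofReal.tendsto 0).comp hq0
    simp only [Function.comp_def, Complex.ofReal_zero] at h2
    exact h2
  set Rmax := (specM B).filter (fun z => ‖z‖ = ρ) with hRmax
  set Rrest := (specM B).filter (fun z => ¬ ‖z‖ = ρ) with hRrest
  have hsplitR : Rmax + Rrest = specM B := Multiset.filter_add_not _ _
  have hrest : Filter.Tendsto (fun k => (Rrest.map fun z => (z * c) ^ k).sum)
      Filter.atTop (nhds 0) := by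
    have h1 := multiset_tendsto Rrest (fun z k => (z * c) ^ k) (fun _ => 0) ?_
    · simpa using h1
    · intro z hz
      rw [hRrest, Multiset.mem_filter] at hz
      have hlt : ‖z * c‖ < 1 := by
        rw [norm_mul, hcdef, Complex.norm_real, Real.norm_eq_abs,
          abs_of_pos (inv_pos.mpr hρpos)]
        have h2 : ‖z‖ < ρ := lt_of_le_of_ne (hub z hz.1) hz.2
        calc ‖z‖ * ρ⁻¹ < ρ * ρ⁻¹ := by
              exact mul_lt_mul_of_pos_right h2 (inv_pos.mpr hρpos)
        _ = 1 := mul_inv_cancel₀ (ne_of_gt hρpos)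
      exact tendsto_pow_atTop_nhds_zero_of_norm_lt_one hlt
  have hmaxt : Filter.Tendsto (fun k => (Rmax.map fun z => (z * c) ^ k).sum)
      Filter.atTop (nhds 0) := by
    have heq : (fun k => (Rmax.map fun z => (z * c) ^ k).sum)
        = fun k => ((specM B).map fun z => (z * c) ^ k).sum
          - (Rrest.map fun z => (z * c) ^ k).sum := by
      funext k
      rw [← hsplitR, Multiset.map_add, Multiset.sum_add]
      ring
    rw [heq]
    have := hcomplex.sub hrest
    simpa using this
  -- contradiction via list_circle
  have hz₀max : z₀ ∈ Rmax := by
    rw [hRmax, Multiset.mem_filter]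
    exact ⟨hz₀mem, hz₀⟩
  set l : List ℂ := Rmax.toList.map (fun z => z * c) with hl
  have hlne : l ≠ [] := by
    rw [hl]
    simp only [ne_eq, List.map_eq_nil_iff]
    intro h0
    have : z₀ ∈ Rmax.toList := (Multiset.mem_toList).mpr hz₀max
    rw [h0] at this
    simp at this
  have hlu : ∀ w ∈ l, ‖w‖ = 1 := by
    intro w hw
    rw [hl, List.mem_map] at hw
    obtain ⟨z, hzl, rfl⟩ := hw
    have hzm : z ∈ Rmax := (Multiset.mem_toList).mp hzl
    rw [hRmax, Multiset.mem_filter] at hzm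
    rw [norm_mul, hcdef, Complex.norm_real, Real.norm_eq_abs, abs_of_pos (inv_pos.mpr hρpos),
      hzm.2, mul_inv_cancel₀ (ne_of_gt hρpos)]
  refine list_circle l hlne hlu ?_
  have hsum_eq : ∀ k : ℕ, (l.map (fun z => z ^ k)).sum = (Rmax.map fun z => (z * c) ^ k).sum := by
    intro k
    rw [hl, List.map_map]
    conv_rhs => rw [← Multiset.coe_toList Rmax]
    rw [Multiset.map_coe, Multiset.sum_coe]
    rfl
  rw [funext hsum_eq]
  exact hmaxt

lemma charpoly_conj {n : ℕ} (A D : Matrix (Fin n) (Fin n) ℝ) (hD : D * D = 1) :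
    (D * A * D).charpoly = A.charpoly := by
  set f : ℝ →+* Polynomial ℝ := Polynomial.C with hf
  set DP : Matrix (Fin n) (Fin n) (Polynomial ℝ) := f.mapMatrix D with hDP
  have hDP1 : DP * DP = 1 := by
    rw [hDP, ← RingHom.map_mul f.mapMatrix, hD, RingHom.map_one]
  have hcomm : Matrix.scalar (Fin n) (X : Polynomial ℝ) * DP
      = DP * Matrix.scalar (Fin n) (X : Polynomial ℝ) :=
    (Matrix.scalar_commute (X : Polynomial ℝ) (fun r => Commute.all _ r) DP)
  have hchar : charmatrix (D * A * D) = DP * charmatrix A * DP := by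
    rw [charmatrix, charmatrix, mul_sub, sub_mul]
    congr 1
    · rw [← hcomm, mul_assoc, hDP1, mul_one]
    · rw [hDP, hf, ← _root_.map_mul, ← _root_.map_mul]
  rw [Matrix.charpoly, Matrix.charpoly, hchar, Matrix.det_mul, Matrix.det_mul]
  have hdet : DP.det * DP.det = 1 := by
    rw [← Matrix.det_mul, hDP1, Matrix.det_one]
  calc DP.det * (charmatrix A).det * DP.det
      = (charmatrix A).det * (DP.det * DP.det) := by ring
  _ = (charmatrix A).det := by rw [hdet, mul_one]

end PFaux

/-- a `J`-sign-symmetric matrix with a nonzero diagonal entry has a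
strictly positive spectral radius which is an eigenvalue. -/
theorem stmt3 {n : ℕ} (A : Matrix (Fin n) (Fin n) ℝ) (hA : JSignSym A)
    (hdiag : ∃ i, A i i ≠ 0) :
    0 < specRad A ∧ ((specRad A : ℂ) ∈ specM A) := by
  classical
  obtain ⟨J, hJ1, hJ2⟩ := hA
  obtain ⟨i₀, hi₀⟩ := hdiag
  set d : Fin n → ℝ := fun i => if i ∈ J then -1 else 1 with hd
  have hdsq : ∀ i, d i * d i = 1 := by
    intro i
    rw [hd]
    by_cases h : i ∈ J <;> simp [h]
  set D : Matrix (Fin n) (Fin n) ℝ := Matrix.diagonal d with hDdef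
  have hDD : D * D = 1 := by
    rw [hDdef, Matrix.diagonal_mul_diagonal]
    have h1 : (fun i => d i * d i) = fun _ : Fin n => (1:ℝ) := by funext i; exact hdsq i
    rw [h1]
    exact Matrix.diagonal_one
  set B : Matrix (Fin n) (Fin n) ℝ := D * A * D with hBdef
  have hBentry : ∀ i j, B i j = d i * A i j * d j := by
    intro i j
    rw [hBdef, hDdef, Matrix.mul_diagonal, Matrix.diagonal_mul]
  have hnotdiag : ∀ i : Fin n, ¬ (A i i < 0) := by
    intro i hlt
    have hx := hJ2 i i hlt
    simp [Xor'] at hx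
  have hAnonneg : ∀ i j, ¬ Xor' (i ∈ J) (j ∈ J) → 0 ≤ A i j := by
    intro i j hx
    by_contra hneg
    push_neg at hneg
    exact hx (hJ2 i j hneg)
  have hBnn : ∀ i j, 0 ≤ B i j := by
    intro i j
    rw [hBentry]
    by_cases hi : i ∈ J <;> by_cases hj : j ∈ J
    · have h0 : 0 ≤ A i j := hAnonneg i j (by simp [Xor', hi, hj])
      have hdi : d i = -1 := by rw [hd]; simp [hi]
      have hdj : d j = -1 := by rw [hd]; simp [hj]
      rw [hdi, hdj]; nlinarith
    · have hx : Xor' (i ∈ J) (j ∈ J) := Or.inl ⟨hi, hj⟩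
      have h0 : A i j ≤ 0 := hJ1 i j hx
      have hdi : d i = -1 := by rw [hd]; simp [hi]
      have hdj : d j = 1 := by rw [hd]; simp [hj]
      rw [hdi, hdj]; nlinarith
    · have hx : Xor' (i ∈ J) (j ∈ J) := Or.inr ⟨hj, hi⟩
      have h0 : A i j ≤ 0 := hJ1 i j hx
      have hdi : d i = 1 := by rw [hd]; simp [hi]
      have hdj : d j = -1 := by rw [hd]; simp [hj]
      rw [hdi, hdj]; nlinarith
    · have h0 : 0 ≤ A i j := hAnonneg i j (by simp [Xor', hi, hj])
      have hdi : d i = 1 := by rw [hd]; simp [hi]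
      have hdj : d j = 1 := by rw [hd]; simp [hj]
      rw [hdi, hdj]; nlinarith
  have hBdiag : 0 < B i₀ i₀ := by
    have h1 : B i₀ i₀ = A i₀ i₀ := by
      rw [hBentry]
      have h2 : d i₀ * A i₀ i₀ * d i₀ = A i₀ i₀ * (d i₀ * d i₀) := by ring
      rw [h2, hdsq i₀, mul_one]
    rw [h1]
    rcases lt_trichotomy (A i₀ i₀) 0 with h | h | h
    · exact absurd h (hnotdiag i₀)
    · exact absurd h hi₀
    · exact h
  have hcpR : B.charpoly = A.charpoly := charpoly_conj A D hDD
  have hcp : specM B = specM A := by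
    show (B.map Complex.ofReal).charpoly.roots = (A.map Complex.ofReal).charpoly.roots
    have h1 : B.map Complex.ofReal = B.map (Complex.ofRealHom : ℝ →+* ℂ) := rfl
    have h2 : A.map Complex.ofReal = A.map (Complex.ofRealHom : ℝ →+* ℂ) := rfl
    rw [h1, h2, Matrix.charpoly_map, Matrix.charpoly_map, hcpR]
  have hrad : specRad B = specRad A := by
    unfold specRad
    rw [hcp]
  obtain ⟨h1, h2⟩ := main_nonneg B hBnn i₀ hBdiag
  rw [hrad] at h1
  rw [hrad, hcp] at h2
  exact ⟨h1, h2⟩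
end

section
/- Let A be an n×n real matrix that is J-sign-symmetric and irreducible. Then the witness set J in the definition of J-sign-symmetricity is unique up to complement: if J₁ and J₂ are both subsets of {1,…,n} satisfying conditions (a) and (b) of the definition for A, then J₂ = J₁ or J₂ = {1,…,n}∖J₁. -/
open Matrix Complex Finset

/-- for an irreducible `J`-sign-symmetric matrix the witness set `J` is unique
up to complement. -/
theorem stmt7 {n : ℕ} (A : Matrix (Fin n) (Fin n) ℝ) (hirr : IsIrredMat A)
    (J₁ J₂ : Finset (Fin n)) (h₁ : IsJWitness A J₁) (h₂ : IsJWitness A J₂) :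
    J₂ = J₁ ∨ J₂ = J₁ᶜ := by
  classical
  set S : Finset (Fin n) := Finset.univ.filter (fun i => (i ∈ J₁ ↔ i ∈ J₂)) with hS
  have key : ∀ i j, A i j ≠ 0 → ((i ∈ J₁ ↔ i ∈ J₂) ↔ (j ∈ J₁ ↔ j ∈ J₂)) := by
    intro i j hij
    rcases lt_or_gt_of_ne hij with hlt | hgt
    · have x1 := h₁.2 i j hlt
      have x2 := h₂.2 i j hlt
      unfold Xor' Xor at x1 x2; tauto
    · have x1 : ¬ Xor' (i ∈ J₁) (j ∈ J₁) := fun hx => absurd (h₁.1 i j hx) (not_le.2 hgt)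
      have x2 : ¬ Xor' (i ∈ J₂) (j ∈ J₂) := fun hx => absurd (h₂.1 i j hx) (not_le.2 hgt)
      unfold Xor' Xor at x1 x2; tauto
  have hmem : ∀ i, i ∈ S ↔ (i ∈ J₁ ↔ i ∈ J₂) := by
    intro i; simp [hS]
  by_cases hSu : S = Finset.univ
  · left
    ext i
    have := (hmem i).1 (hSu ▸ Finset.mem_univ i)
    tauto
  by_cases hSe : S = ∅
  · right
    ext i
    have : i ∉ S := by simp [hSe]
    rw [hmem] at this
    simp only [Finset.mem_compl]
    tauto
  · exfalso
    apply hirr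
    refine ⟨S, Finset.nonempty_iff_ne_empty.2 hSe, hSu, ?_⟩
    intro i hi j hj
    by_contra hne
    exact hj ((hmem j).2 (((key i j hne).1 ((hmem i).1 hi))))
end

section
/- Let n ≥ 2, let W ⊆ {1,…,n}×{1,…,n} satisfy conditions (1) and (2), and let A be an n×n real matrix with complex eigenvalues λ₁,…,λₙ listed according to algebraic multiplicity. Then the multiset of complex eigenvalues of the W-matrix A_W^{(2)} (listed according to algebraic multiplicity) is exactly the multiset of all products λ_i λ_j with 1 ≤ i < j ≤ n. -/
open Matrix Complex Finset

section Helpers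

open Polynomial



variable {R : Type*} [CommRing R]

def comp2 {n : ℕ} (M : Matrix (Fin n) (Fin n) R) : Matrix (Idx2 n) (Idx2 n) R :=
  fun p q => M p.1.1 q.1.1 * M p.1.2 q.1.2 - M p.1.1 q.1.2 * M p.1.2 q.1.1

lemma comp2_one {n : ℕ} : comp2 (1 : Matrix (Fin n) (Fin n) R) = 1 := by
  ext ⟨⟨i, j⟩, hij⟩ ⟨⟨k, l⟩, hkl⟩
  simp only [comp2, one_apply, Subtype.mk.injEq, Prod.mk.injEq]
  split_ifs <;> simp_all <;> omega

lemma comp2_mul {n : ℕ} (M N : Matrix (Fin n) (Fin n) R) :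
    comp2 (M * N) = comp2 M * comp2 N := by
  ext ⟨⟨i, j⟩, hij⟩ ⟨⟨k, l⟩, hkl⟩
  have expand : comp2 (M * N) ⟨(i,j),hij⟩ ⟨(k,l),hkl⟩ =
      ∑ st : Fin n × Fin n,
        M i st.1 * M j st.2 * (N st.1 k * N st.2 l - N st.1 l * N st.2 k) := by
    simp only [comp2, Matrix.mul_apply]
    rw [Finset.sum_mul_sum, Finset.sum_mul_sum, ← Finset.sum_sub_distrib]
    rw [← Finset.univ_product_univ, Finset.sum_product]
    apply Finset.sum_congr rfl; intro s _
    rw [← Finset.sum_sub_distrib]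
    apply Finset.sum_congr rfl; intro t _
    ring
  rw [expand]
  -- split the sum over all pairs into s < t, s = t, s > t
  classical
  rw [← Finset.sum_filter_add_sum_filter_not Finset.univ (fun st : Fin n × Fin n => st.1 < st.2)]
  have hdiag : ∑ st ∈ Finset.univ.filter (fun st : Fin n × Fin n => ¬ st.1 < st.2),
      M i st.1 * M j st.2 * (N st.1 k * N st.2 l - N st.1 l * N st.2 k)
      = ∑ st ∈ Finset.univ.filter (fun st : Fin n × Fin n => st.1 < st.2),
        M i st.2 * M j st.1 * (N st.2 k * N st.1 l - N st.2 l * N st.1 k) := by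
    rw [← Finset.sum_filter_add_sum_filter_not
      (Finset.univ.filter (fun st : Fin n × Fin n => ¬ st.1 < st.2))
      (fun st : Fin n × Fin n => st.1 = st.2)]
    have h0 : ∑ st ∈ (Finset.univ.filter (fun st : Fin n × Fin n => ¬ st.1 < st.2)).filter
        (fun st : Fin n × Fin n => st.1 = st.2),
        M i st.1 * M j st.2 * (N st.1 k * N st.2 l - N st.1 l * N st.2 k) = 0 := by
      apply Finset.sum_eq_zero
      intro st hst
      simp only [Finset.mem_filter] at hst
      rw [hst.2]
      ring
    rw [h0, zero_add]
    apply Finset.sum_nbij' (fun st => Prod.swap st) (fun st => Prod.swap st)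
    · intro a ha
      simp only [Finset.mem_filter, Finset.mem_univ, true_and] at ha ⊢
      rcases lt_or_eq_of_le (not_lt.mp ha.1) with h | h
      · exact h
      · exact absurd h.symm ha.2
    · intro a ha
      simp only [Finset.mem_filter, Finset.mem_univ, true_and] at ha ⊢
      exact ⟨not_lt.mpr ha.le, ha.ne'⟩
    · intro a _; exact Prod.swap_swap a
    · intro a _; exact Prod.swap_swap a
    · intro a _; rfl
  rw [hdiag, ← Finset.sum_add_distrib]
  have step : ∑ st ∈ Finset.univ.filter (fun st : Fin n × Fin n => st.1 < st.2),
      (M i st.1 * M j st.2 * (N st.1 k * N st.2 l - N st.1 l * N st.2 k) +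
       M i st.2 * M j st.1 * (N st.2 k * N st.1 l - N st.2 l * N st.1 k))
      = ∑ st ∈ Finset.univ.filter (fun st : Fin n × Fin n => st.1 < st.2),
        (M i st.1 * M j st.2 - M i st.2 * M j st.1) *
          (N st.1 k * N st.2 l - N st.1 l * N st.2 k) := by
    apply Finset.sum_congr rfl; intro st _; ring
  rw [step]
  rw [Finset.sum_subtype (p := fun st : Fin n × Fin n => st.1 < st.2)
    (Finset.univ.filter (fun st : Fin n × Fin n => st.1 < st.2))
    (fun st => by simp)
    (fun st : Fin n × Fin n => (M i st.1 * M j st.2 - M i st.2 * M j st.1) *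
      (N st.1 k * N st.2 l - N st.1 l * N st.2 k))]
  rw [Matrix.mul_apply]
  rfl

lemma charpoly_blockTriangular_inj {m α : Type*} [Fintype m] [DecidableEq m] [LinearOrder α]
    {M : Matrix m m R} {b : m → α} (hb : Function.Injective b)
    (h : M.BlockTriangular b) :
    M.charpoly = ∏ i : m, (X - C (M i i)) := by
  rw [h.charpoly, Finset.prod_image (fun x _ y _ e => hb e)]
  apply Finset.prod_congr rfl
  intro i _
  haveI : Unique {a // b a = b i} := ⟨⟨⟨i, rfl⟩⟩, fun p => Subtype.ext (hb p.2)⟩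
  rw [Matrix.charpoly, Matrix.det_unique, charmatrix_apply_eq]
  have hd : (default : {a // b a = b i}) = ⟨i, rfl⟩ :=
    Subtype.ext (hb (default : {a // b a = b i}).2)
  rw [Matrix.toSquareBlock_def, hd]
  rfl

lemma comp2_blockTriangular {n : ℕ} {T : Matrix (Fin n) (Fin n) R} {b : Fin n → ℕ}
    (h : T.BlockTriangular b) :
    (comp2 T).BlockTriangular
      (fun p : Idx2 n => toLex (min (b p.1.1) (b p.1.2), max (b p.1.1) (b p.1.2))) := by
  rintro ⟨⟨i, j⟩, hij⟩ ⟨⟨k, l⟩, hkl⟩ hlt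
  have key : ∀ x y u v : Fin n, b x ≤ b u → b y ≤ b v →
      ¬ (toLex (min (b u) (b v), max (b u) (b v)) < toLex (min (b x) (b y), max (b x) (b y))) := by
    intro x y u v h1 h2
    apply not_lt_of_ge
    have hmin : min (b x) (b y) ≤ min (b u) (b v) := min_le_min h1 h2
    have hmax : max (b x) (b y) ≤ max (b u) (b v) := max_le_max h1 h2
    rcases lt_or_eq_of_le hmin with hm | hm
    · exact le_of_lt (Prod.Lex.lt_iff.mpr (Or.inl hm))
    · exact Prod.Lex.le_iff.mpr (Or.inr ⟨hm, hmax⟩)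
  have z1 : T i k * T j l = 0 := by
    by_cases h1 : b i ≤ b k
    · by_cases h2 : b j ≤ b l
      · exact absurd hlt (key i j k l h1 h2)
      · rw [h (not_le.mp h2), mul_zero]
    · rw [h (not_le.mp h1), zero_mul]
  have z2 : T i l * T j k = 0 := by
    by_cases h1 : b i ≤ b l
    · by_cases h2 : b j ≤ b k
      · refine absurd hlt ?_
        have := key i j l k h1 h2
        rwa [min_comm (b l) (b k), max_comm (b l) (b k)] at this
      · rw [h (not_le.mp h2), mul_zero]
    · rw [h (not_le.mp h1), zero_mul]
  show T i k * T j l - T i l * T j k = 0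
  rw [z1, z2, sub_zero]

lemma comp2_inj_weight {n : ℕ} {b : Fin n → ℕ} (hb : Function.Injective b) :
    Function.Injective
      (fun p : Idx2 n => toLex (min (b p.1.1) (b p.1.2), max (b p.1.1) (b p.1.2))) := by
  rintro ⟨⟨i, j⟩, hij⟩ ⟨⟨k, l⟩, hkl⟩ he
  have he' : (min (b i) (b j), max (b i) (b j)) = (min (b k) (b l), max (b k) (b l)) :=
    toLex.injective he
  apply Subtype.ext
  show (i, j) = (k, l)
  rcases le_total (b i) (b j) with h1 | h1 <;> rcases le_total (b k) (b l) with h2 | h2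
  · rw [min_eq_left h1, max_eq_right h1, min_eq_left h2, max_eq_right h2] at he'
    obtain ⟨e1, e2⟩ := Prod.mk.injEq .. ▸ he'
    exact Prod.ext (hb e1) (hb e2)
  · rw [min_eq_left h1, max_eq_right h1, min_eq_right h2, max_eq_left h2] at he'
    obtain ⟨e1, e2⟩ := Prod.mk.injEq .. ▸ he'
    obtain rfl : i = l := hb e1
    obtain rfl : j = k := hb e2
    exact absurd (hij.trans hkl) (lt_irrefl _)
  · rw [min_eq_right h1, max_eq_left h1, min_eq_left h2, max_eq_right h2] at he'
    obtain ⟨e1, e2⟩ := Prod.mk.injEq .. ▸ he'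
    obtain rfl : j = k := hb e1
    obtain rfl : i = l := hb e2
    exact absurd (hij.trans hkl) (lt_irrefl _)
  · rw [min_eq_right h1, max_eq_left h1, min_eq_right h2, max_eq_left h2] at he'
    obtain ⟨e1, e2⟩ := Prod.mk.injEq .. ▸ he'
    exact Prod.ext (hb e2) (hb e1)

lemma charpoly_conj_s9 {m : Type*} [Fintype m] [DecidableEq m] {K : Type*} [Field K]
    (P M : Matrix m m K) (h : IsUnit P) :
    (P * M * P⁻¹).charpoly = M.charpoly := by
  have hd : IsUnit P.det := (Matrix.isUnit_iff_isUnit_det _).mp h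
  have h1 : P * P⁻¹ = 1 := Matrix.mul_nonsing_inv _ hd
  have key : charmatrix (P * M * P⁻¹) =
      P.map C * charmatrix M * P⁻¹.map C := by
    unfold charmatrix
    have hmc : ∀ (A B : Matrix m m K), (A * B).map (C : K → K[X]) =
        A.map C * B.map C := fun A B => Matrix.map_mul (f := (C : K →+* K[X]))
    simp only [RingHom.mapMatrix_apply]
    rw [mul_sub, sub_mul]
    congr 1
    · -- P.map C * scalar X * P⁻¹.map C = scalar X
      have hc : (P.map (C : K → K[X])) * Matrix.scalar m X = Matrix.scalar m X * P.map C :=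
        (Matrix.scalar_commute X (fun r => Commute.all _ _) (P.map C)).symm
      symm
      rw [hc, mul_assoc, ← hmc, h1, Matrix.map_one _ (map_zero C) (map_one C), mul_one]
    · rw [← hmc, ← hmc]
  rw [Matrix.charpoly, key, det_mul, det_mul, Matrix.charpoly, mul_comm, ← mul_assoc]
  rw [← det_mul, ← Matrix.map_mul (f := (C : K →+* K[X]))]
  have h2 : P⁻¹ * P = 1 := Matrix.nonsing_inv_mul _ hd
  rw [h2]
  simp

lemma exists_triangularization : ∀ {n : ℕ} (B : Matrix (Fin n) (Fin n) ℂ),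
    ∃ (P T : Matrix (Fin n) (Fin n) ℂ) (b : Fin n → ℕ),
      IsUnit P ∧ Function.Injective b ∧ T.BlockTriangular b ∧ B = P * T * P⁻¹ := by
  intro n
  induction n with
  | zero =>
    intro B
    exact ⟨1, B, fun i => 0, isUnit_one, fun i => i.elim0, fun i => i.elim0,
      by rw [inv_one, one_mul, mul_one]⟩
  | succ n IH =>
    intro B
    -- find an eigenvalue and eigenvector
    obtain ⟨μ, hμ⟩ := Module.End.exists_eigenvalue (Matrix.toLin' B)
    obtain ⟨v, hv⟩ := hμ.exists_hasEigenvector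
    have hBv : B.mulVec v = μ • v := by
      rw [← Matrix.toLin'_apply]; exact hv.apply_eq_smul
    obtain ⟨i0, hi0⟩ : ∃ i, v i ≠ 0 := Function.ne_iff.mp hv.2
    set P₀ : Matrix (Fin (n+1)) (Fin (n+1)) ℂ := (1 : Matrix _ _ ℂ).updateCol i0 v with hP₀def
    have hdet : P₀.det = v i0 := by
      rw [← Matrix.cramer_apply, Matrix.cramer_one]; rfl
    have hP₀ : IsUnit P₀ := by
      rw [Matrix.isUnit_iff_isUnit_det, hdet]; exact hi0.isUnit
    have hP₀d : IsUnit P₀.det := (Matrix.isUnit_iff_isUnit_det _).mp hP₀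
    set Cm : Matrix (Fin (n+1)) (Fin (n+1)) ℂ := P₀⁻¹ * B * P₀ with hCdef
    have hcol : ∀ j, Cm j i0 = if j = i0 then μ else 0 := by
      have h1 : P₀.mulVec (Pi.single i0 (1:ℂ)) = v := by
        ext j
        rw [Matrix.mulVec_single]
        simp [hP₀def, Matrix.updateCol_apply]
      have h2 : Cm.mulVec (Pi.single i0 (1:ℂ)) = μ • (Pi.single i0 (1:ℂ) : Fin (n+1) → ℂ) := by
        rw [hCdef, ← Matrix.mulVec_mulVec, ← Matrix.mulVec_mulVec, h1, hBv,
          Matrix.mulVec_smul]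
        congr 1
        rw [← h1, Matrix.mulVec_mulVec, Matrix.nonsing_inv_mul _ hP₀d, Matrix.one_mulVec]
      intro j
      have := congrFun h2 j
      rw [Matrix.mulVec_single] at this
      simpa [Pi.single_apply, mul_comm] using this
    -- the reindexing equivalence sending i0 to inl 0
    set eqv : Fin (n+1) ≃ (Fin 1 ⊕ Fin n) :=
      (Equiv.swap i0 0).trans ((finCongr (by omega : n + 1 = 1 + n)).trans finSumFinEquiv.symm)
      with heqvdef
    have heqv0 : eqv i0 = Sum.inl 0 := by
      simp only [heqvdef, Equiv.trans_apply, Equiv.swap_apply_left]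
      rw [Equiv.symm_apply_eq]
      apply Fin.ext
      simp
    have hsymm : eqv.symm (Sum.inl 0) = i0 := by
      rw [Equiv.symm_apply_eq, heqv0]
    set Ch : Matrix (Fin 1 ⊕ Fin n) (Fin 1 ⊕ Fin n) ℂ := Matrix.reindex eqv eqv Cm with hChdef
    set D : Matrix (Fin n) (Fin n) ℂ := Matrix.of (fun a c => Ch (Sum.inr a) (Sum.inr c))
      with hDdef
    set A11 : Matrix (Fin 1) (Fin 1) ℂ := Matrix.of (fun a c => Ch (Sum.inl a) (Sum.inl c))
      with hA11def
    set r12 : Matrix (Fin 1) (Fin n) ℂ := Matrix.of (fun a c => Ch (Sum.inl a) (Sum.inr c))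
      with hr12def
    have hCh : Ch = fromBlocks A11 r12 0 D := by
      ext i j
      cases i with
      | inl a =>
        cases j with
        | inl c => rfl
        | inr c => rfl
      | inr a =>
        cases j with
        | inl c =>
          have hb : c = 0 := Subsingleton.elim _ _
          subst hb
          show Cm (eqv.symm (Sum.inr a)) (eqv.symm (Sum.inl 0)) = (0 : Matrix _ _ ℂ) a 0
          rw [hsymm, hcol, if_neg, Matrix.zero_apply]
          intro hcontr
          have : (Sum.inr a : Fin 1 ⊕ Fin n) = Sum.inl 0 := by
            rw [← heqv0, ← hcontr, Equiv.apply_symm_apply]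
          simp at this
        | inr c => rfl
    obtain ⟨P, T, b, hPu, hbinj, hTtri, hDeq⟩ := IH D
    have hPd : IsUnit P.det := (Matrix.isUnit_iff_isUnit_det _).mp hPu
    set Ph : Matrix (Fin 1 ⊕ Fin n) (Fin 1 ⊕ Fin n) ℂ := fromBlocks 1 0 0 P with hPhdef
    have hPhinv : Ph⁻¹ = fromBlocks 1 0 0 P⁻¹ := by
      apply Matrix.inv_eq_right_inv
      rw [hPhdef, Matrix.fromBlocks_multiply]
      simp [Matrix.mul_nonsing_inv _ hPd, Matrix.fromBlocks_one]
    have hPhdet : IsUnit Ph.det := by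
      rw [hPhdef, Matrix.det_fromBlocks_zero₂₁]
      simpa using hPd
    have hPhu : IsUnit Ph := (Matrix.isUnit_iff_isUnit_det _).mpr hPhdet
    set Th : Matrix (Fin 1 ⊕ Fin n) (Fin 1 ⊕ Fin n) ℂ := fromBlocks A11 (r12 * P) 0 T
      with hThdef
    have hChT : Ch = Ph * Th * Ph⁻¹ := by
      rw [hPhinv, hPhdef, hThdef, Matrix.fromBlocks_multiply, Matrix.fromBlocks_multiply, hCh,
        hDeq]
      congr 1 <;> simp [mul_assoc, Matrix.mul_nonsing_inv _ hPd]
      rw [Matrix.mul_assoc, Matrix.mul_nonsing_inv _ hPd, Matrix.mul_one]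
    set w : Fin 1 ⊕ Fin n → ℕ := Sum.elim (fun _ => 0) (fun j => b j + 1) with hwdef
    have hThtri : Th.BlockTriangular w := by
      rintro (a|a) (c|c) hij
      · exact absurd hij (lt_irrefl _)
      · exact absurd hij (by simp [hwdef])
      · rfl
      · have : b c < b a := by simpa [hwdef] using hij
        exact hTtri this
    have hwinj : Function.Injective w := by
      rintro (a|a) (c|c) h
      · exact congrArg Sum.inl (Subsingleton.elim _ _)
      · exact absurd h (by simp [hwdef])
      · exact absurd h (by simp [hwdef])
      · simp only [hwdef, Sum.elim_inr, add_left_inj] at h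
        exact congrArg Sum.inr (hbinj h)
    refine ⟨P₀ * Matrix.reindex eqv.symm eqv.symm Ph, Matrix.reindex eqv.symm eqv.symm Th,
      w ∘ eqv, ?_, ?_, ?_, ?_⟩
    · apply hP₀.mul
      rw [Matrix.isUnit_iff_isUnit_det, Matrix.det_reindex_self]
      exact hPhdet
    · exact hwinj.comp eqv.injective
    · rw [Matrix.blockTriangular_reindex_iff]
      have hfun : (w ∘ ⇑eqv) ∘ ⇑eqv.symm = w := by
        funext x; simp
      rwa [hfun]
    · have hB : B = P₀ * Cm * P₀⁻¹ := by
        rw [hCdef, ← mul_assoc, ← mul_assoc, Matrix.mul_nonsing_inv _ hP₀d, one_mul,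
          mul_assoc, Matrix.mul_nonsing_inv _ hP₀d, mul_one]
      have hCm : Cm = Matrix.reindex eqv.symm eqv.symm Ch := by
        rw [hChdef]
        ext i j
        simp
      have hmulre : ∀ (X Y : Matrix (Fin 1 ⊕ Fin n) (Fin 1 ⊕ Fin n) ℂ),
          Matrix.reindex eqv.symm eqv.symm (X * Y) =
            Matrix.reindex eqv.symm eqv.symm X * Matrix.reindex eqv.symm eqv.symm Y := by
        intro X Y
        simp only [Matrix.reindex_apply, Equiv.symm_symm]
        exact (Matrix.submatrix_mul_equiv X Y _ _ _).symm
      rw [hB, hCm, hChT, hmulre, hmulre, Matrix.mul_inv_rev, Matrix.inv_reindex]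
      rw [← mul_assoc, ← mul_assoc]
      exact mul_assoc _ _ _

lemma spec_comp2 {n : ℕ} (B : Matrix (Fin n) (Fin n) ℂ) :
    ∃ d : Fin n → ℂ,
      B.charpoly.roots = Multiset.map d Finset.univ.val ∧
      (comp2 B).charpoly.roots =
        Multiset.map (fun p : Idx2 n => d p.1.1 * d p.1.2) Finset.univ.val := by
  obtain ⟨P, T, b, hPu, hbinj, hTtri, hBeq⟩ := exists_triangularization B
  have hPd := (Matrix.isUnit_iff_isUnit_det _).mp hPu
  have hroots : ∀ {ι : Type} [Fintype ι] [DecidableEq ι] (g : ι → ℂ),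
      (∏ i : ι, (X - C (g i))).roots = Multiset.map g Finset.univ.val := by
    intro ι _ _ g
    rw [Finset.prod_eq_multiset_prod]
    have hcomp : (fun i : ι => X - C (g i)) = (fun a => X - C a) ∘ g := rfl
    rw [hcomp, ← Multiset.map_map]
    exact roots_multiset_prod_X_sub_C _
  refine ⟨fun i => T i i, ?_, ?_⟩
  · rw [hBeq, charpoly_conj_s9 _ _ hPu, charpoly_blockTriangular_inj hbinj hTtri]
    exact hroots _
  · have h1 : comp2 P * comp2 P⁻¹ = 1 := by
      rw [← comp2_mul, Matrix.mul_nonsing_inv _ hPd, comp2_one]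
    have h2 : comp2 P⁻¹ * comp2 P = 1 := by
      rw [← comp2_mul, Matrix.nonsing_inv_mul _ hPd, comp2_one]
    have hCu : IsUnit (comp2 P) := ⟨⟨comp2 P, comp2 P⁻¹, h1, h2⟩, rfl⟩
    have hinv : (comp2 P)⁻¹ = comp2 P⁻¹ := Matrix.inv_eq_right_inv h1
    rw [hBeq, comp2_mul, comp2_mul, ← hinv, charpoly_conj_s9 _ _ hCu,
      charpoly_blockTriangular_inj (comp2_inj_weight hbinj) (comp2_blockTriangular hTtri)]
    rw [hroots (fun p : Idx2 n => comp2 T p p)]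
    congr 1
    funext p
    obtain ⟨⟨i, j⟩, hij⟩ := p
    show T i i * T j j - T i j * T j i = T i i * T j j
    have hz : T i j * T j i = 0 := by
      rcases lt_trichotomy (b i) (b j) with h | h | h
      · rw [hTtri h, mul_zero]
      · exact absurd (hbinj h) (ne_of_lt hij)
      · rw [hTtri h, zero_mul]
    rw [hz, sub_zero]

lemma pairProd_subtype {n : ℕ} (f : Fin n → ℂ) :
    Multiset.map (fun p : Idx2 n => f p.1.1 * f p.1.2) Finset.univ.val =
      Multiset.map (fun p : Fin n × Fin n => f p.1 * f p.2)
        (Finset.univ.filter (fun p : Fin n × Fin n => p.1 < p.2)).val := by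
  rw [← Finset.univ_map_subtype, Finset.map_val, Multiset.map_map]
  rfl

lemma pairProd_powerset : ∀ (n : ℕ) (f : Fin n → ℂ),
    Multiset.map (fun p : Fin n × Fin n => f p.1 * f p.2)
        (Finset.univ.filter (fun p : Fin n × Fin n => p.1 < p.2)).val =
      ((Multiset.map f Finset.univ.val).powersetCard 2).map Multiset.prod := by
  intro n
  induction n with
  | zero =>
    intro f
    have h1 : (Finset.univ.filter (fun p : Fin 0 × Fin 0 => p.1 < p.2)) = ∅ := by
      apply Finset.eq_empty_of_forall_notMem; rintro ⟨i, _⟩; exact i.elim0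
    have h2 : (Finset.univ : Finset (Fin 0)) = ∅ := by
      apply Finset.eq_empty_of_forall_notMem; intro i; exact i.elim0
    rw [h1, h2]
    rfl
  | succ n IH =>
    intro f
    -- split the filter of pairs
    have hd : Disjoint
        ((Finset.univ : Finset (Fin n)).map
          ⟨fun j => ((0 : Fin (n+1)), j.succ), fun a c h => by
            simpa [Prod.ext_iff] using h⟩)
        ((Finset.univ.filter (fun p : Fin n × Fin n => p.1 < p.2)).map
          ⟨fun p => (p.1.succ, p.2.succ), fun a c h => by
            simp only [Prod.ext_iff] at h
            exact Prod.ext (Fin.succ_injective _ h.1) (Fin.succ_injective _ h.2)⟩) := by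
      rw [Finset.disjoint_left]
      rintro ⟨x, y⟩ h1 h2
      simp only [Finset.mem_map, Function.Embedding.coeFn_mk, DFunLike.coe, Prod.mk.injEq] at h1 h2
      obtain ⟨j, _, hj1, hj2⟩ := h1
      obtain ⟨p, _, hp1, hp2⟩ := h2
      exact (Fin.succ_ne_zero _) (hp1.trans hj1.symm)
    have hsplit : (Finset.univ.filter (fun p : Fin (n+1) × Fin (n+1) => p.1 < p.2)) =
        Finset.disjUnion _ _ hd := by
      ext ⟨x, y⟩
      simp only [Finset.mem_filter, Finset.mem_univ, true_and, Finset.mem_disjUnion,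
        Finset.mem_map, Function.Embedding.coeFn_mk, DFunLike.coe, Prod.mk.injEq]
      constructor
      · intro hxy
        rcases Fin.eq_zero_or_eq_succ x with rfl | ⟨a, rfl⟩
        · obtain ⟨c, rfl⟩ := Fin.exists_succ_eq.mpr (Fin.pos_iff_ne_zero.mp hxy)
          exact Or.inl ⟨c, rfl, rfl⟩
        · have hy0 : y ≠ 0 := by
            intro h; rw [h] at hxy; exact absurd hxy (Fin.not_lt_zero _)
          obtain ⟨c, rfl⟩ := Fin.exists_succ_eq.mpr hy0
          exact Or.inr ⟨(a, c), Fin.succ_lt_succ_iff.mp hxy, rfl, rfl⟩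
      · rintro (⟨c, rfl, rfl⟩ | ⟨p, hp, rfl, rfl⟩)
        · exact Fin.succ_pos _
        · exact Fin.succ_lt_succ_iff.mpr hp
    have hval : ∀ (s t : Finset (Fin (n+1) × Fin (n+1))) (h : Disjoint s t),
        (s.disjUnion t h).val = s.val + t.val := fun s t h => rfl
    rw [hsplit, hval, Multiset.map_add, Finset.map_val, Finset.map_val,
      Multiset.map_map, Multiset.map_map]
    -- RHS
    rw [Fin.univ_succ, Finset.cons_val, Finset.map_val, Multiset.map_cons, Multiset.map_map,
      Multiset.powersetCard_cons, Multiset.map_add, Multiset.map_map,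
      Multiset.powersetCard_one, Multiset.map_map, Multiset.map_map]
    conv_rhs => rw [add_comm]
    congr 1
    · congr 1
      funext j
      show f 0 * f j.succ = (f 0 ::ₘ {f j.succ}).prod
      simp
    · exact IH (fun j => f j.succ)


/-- sorting map from `WIdx` to `Idx2`. -/
def wsort {n : ℕ} (W : Finset (Fin n × Fin n)) (r : WIdx W) : Idx2 n :=
  if h : r.1.1 < r.1.2 then ⟨r.1, h⟩
  else ⟨(r.1.2, r.1.1), lt_of_le_of_ne (not_lt.mp h) (Ne.symm r.2.2)⟩

/-- sign of a `WIdx` element. -/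
noncomputable def wsign {n : ℕ} (W : Finset (Fin n × Fin n)) (r : WIdx W) : ℂ :=
  if r.1.1 < r.1.2 then 1 else -1

lemma wsort_bijective {n : ℕ} {W : Finset (Fin n × Fin n)} (hW : WCond W) :
    Function.Bijective (wsort W) := by
  constructor
  · rintro ⟨p, hpW, hpne⟩ ⟨q, hqW, hqne⟩ h
    unfold wsort at h
    apply Subtype.ext
    split_ifs at h with h1 h2 h2 <;>
      simp only [Subtype.mk.injEq] at h
    · exact h
    · -- p sorted, q reversed : q = p.swap, both in W
      exfalso
      have hq : q = p.swap := by rw [h]; rfl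
      apply hpne
      exact ((hW.2 p).mp ⟨hpW, hq ▸ hqW⟩)
    · exfalso
      have hq : p = q.swap := by rw [← h]; rfl
      apply hqne
      exact ((hW.2 q).mp ⟨hqW, hq ▸ hpW⟩)
    · obtain ⟨e1, e2⟩ := Prod.mk.injEq .. ▸ h
      exact Prod.ext e2 e1
  · rintro ⟨⟨a, b⟩, hab⟩
    rcases hW.1 (a, b) with hmem | hmem
    · refine ⟨⟨(a, b), hmem, ne_of_lt hab⟩, ?_⟩
      unfold wsort
      rw [dif_pos hab]
    · refine ⟨⟨(b, a), hmem, ne_of_gt hab⟩, ?_⟩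
      unfold wsort
      rw [dif_neg (by exact not_lt.mpr (le_of_lt hab))]

end Helpers

/-- the eigenvalues of the `W`-matrix `A_W^{(2)}` (with multiplicity) are
exactly the products `λᵢ λⱼ`, `1 ≤ i < j ≤ n`, of the eigenvalues of `A`. -/
theorem stmt9 {n : ℕ} (hn : 2 ≤ n) (W : Finset (Fin n × Fin n)) (hW : WCond W)
    (A : Matrix (Fin n) (Fin n) ℝ) (lam : Fin n → ℂ)
    (hl : specM A = Multiset.map lam Finset.univ.val) :
    specM (Wmatrix A W) =
      Multiset.map (fun p : Fin n × Fin n => lam p.1 * lam p.2)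
        (Finset.univ.filter (fun p : Fin n × Fin n => p.1 < p.2)).val := by
  classical
  set B : Matrix (Fin n) (Fin n) ℂ := A.map Complex.ofReal with hBdef
  have hbij := wsort_bijective hW
  let E : WIdx W ≃ Idx2 n := Equiv.ofBijective _ hbij
  set WB : Matrix (WIdx W) (WIdx W) ℂ := (Wmatrix A W).map Complex.ofReal with hWBdef
  have hentry : WB = Matrix.diagonal (wsign W) *
      (Matrix.reindex E.symm E.symm (comp2 B)) * Matrix.diagonal (wsign W) := by
    ext r s
    rw [Matrix.mul_diagonal, Matrix.diagonal_mul]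
    have hre : (Matrix.reindex E.symm E.symm (comp2 B)) r s =
        comp2 B (wsort W r) (wsort W s) := by
      simp [Matrix.reindex_apply, Matrix.submatrix_apply, E]
    rw [hre]
    rcases r with ⟨⟨i, j⟩, hijW, hijne⟩
    rcases s with ⟨⟨k, l⟩, hklW, hklne⟩
    simp only [hWBdef, Matrix.map_apply, Wmatrix, hBdef]
    unfold wsort wsign comp2
    split_ifs <;> simp only [Matrix.map_apply] <;> push_cast <;> ring
  have hsq : Matrix.diagonal (wsign W) * Matrix.diagonal (wsign W) = 1 := by
    rw [Matrix.diagonal_mul_diagonal]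
    have h1 : (fun i => wsign W i * wsign W i) = fun _ : WIdx W => (1 : ℂ) := by
      funext r
      show wsign W r * wsign W r = 1
      unfold wsign
      split_ifs <;> norm_num
    rw [h1, Matrix.diagonal_one]
  have hdu : IsUnit (Matrix.diagonal (wsign W)) := ⟨⟨_, _, hsq, hsq⟩, rfl⟩
  have hdinv : (Matrix.diagonal (wsign W))⁻¹ = Matrix.diagonal (wsign W) :=
    Matrix.inv_eq_right_inv hsq
  have hcp : WB.charpoly = (comp2 B).charpoly := by
    rw [hentry]
    nth_rewrite 2 [← hdinv]
    rw [charpoly_conj_s9 _ _ hdu, Matrix.charpoly_reindex]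
  obtain ⟨d, hd1, hd2⟩ := spec_comp2 B
  have hlam : Multiset.map d Finset.univ.val = Multiset.map lam Finset.univ.val := by
    rw [← hd1]; exact hl
  have hspec : specM (Wmatrix A W) = WB.charpoly.roots := rfl
  rw [hspec, hcp, hd2, pairProd_subtype, pairProd_powerset, hlam, ← pairProd_powerset]
end

section
/- Let A be an n×n real matrix (n ≥ 2) whose second compound matrix A^{(2)} is J-sign-symmetric. Then there exists a set W ⊆ {1,…,n}×{1,…,n} satisfying conditions (1) and (2) such that the corresponding W-matrix A_W^{(2)} is entrywise nonnegative. Moreover, if A^{(2)} is irreducible, then A_W^{(2)} is also irreducible. -/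
open Matrix Complex Finset

/-- Sorting map from `W`-indices to compound indices. -/
def sortW {n : ℕ} (W : Finset (Fin n × Fin n)) (p : WIdx W) : Idx2 n :=
  if h : p.1.1 < p.1.2 then ⟨p.1, h⟩
  else ⟨(p.1.2, p.1.1), p.2.2.lt_or_gt.resolve_left h⟩

lemma sortW_pos {n : ℕ} (W : Finset (Fin n × Fin n)) (p : WIdx W)
    (h : p.1.1 < p.1.2) : sortW W p = ⟨p.1, h⟩ := dif_pos h

lemma sortW_neg {n : ℕ} (W : Finset (Fin n × Fin n)) (p : WIdx W)
    (h : p.1.2 < p.1.1) : sortW W p = ⟨(p.1.2, p.1.1), h⟩ := dif_neg (asymm h)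

/-- if `A^{(2)}` is `J`-sign-symmetric then there is a set `W` satisfying
conditions (1) and (2) with `A_W^{(2)}` entrywise nonnegative; irreducibility of `A^{(2)}`
moreover gives irreducibility of `A_W^{(2)}`. -/
theorem stmt10 {n : ℕ} (hn : 2 ≤ n) (A : Matrix (Fin n) (Fin n) ℝ)
    (hA2 : JSignSym (compound2 A)) :
    ∃ W : Finset (Fin n × Fin n), WCond W ∧ (∀ p q, 0 ≤ Wmatrix A W p q) ∧
      (IsIrredMat (compound2 A) → IsIrredMat (Wmatrix A W)) := by
  classical
  obtain ⟨Jt, hJa, hJb⟩ := hA2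
  set σ : Idx2 n → ℝ := fun q => if q ∈ Jt then -1 else 1 with hσdef
  have key : ∀ p q : Idx2 n, 0 ≤ σ p * σ q * compound2 A p q := by
    intro p q
    rcases lt_or_ge (compound2 A p q) 0 with hc | hc
    · rcases hJb p q hc with ⟨hp, hq⟩ | ⟨hq, hp⟩
      · simp only [hσdef, if_pos hp, if_neg hq]; nlinarith
      · simp only [hσdef, if_neg hp, if_pos hq]; nlinarith
    · by_cases hp : p ∈ Jt <;> by_cases hq : q ∈ Jt
      · simp only [hσdef, if_pos hp, if_pos hq]; nlinarith
      · have h0 := hJa p q (Or.inl ⟨hp, hq⟩)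
        have hz : compound2 A p q = 0 := le_antisymm h0 hc
        simp [hz]
      · have h0 := hJa p q (Or.inr ⟨hq, hp⟩)
        have hz : compound2 A p q = 0 := le_antisymm h0 hc
        simp [hz]
      · simp only [hσdef, if_neg hp, if_neg hq]; nlinarith
  set W : Finset (Fin n × Fin n) := Finset.univ.filter (fun p =>
      p.1 = p.2 ∨ (∃ h : p.1 < p.2, (⟨p, h⟩ : Idx2 n) ∉ Jt) ∨
        (∃ h : p.2 < p.1, (⟨(p.2, p.1), h⟩ : Idx2 n) ∈ Jt)) with hWdef
  have hmem : ∀ p : Fin n × Fin n, p ∈ W ↔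
      (p.1 = p.2 ∨ (∃ h : p.1 < p.2, (⟨p, h⟩ : Idx2 n) ∉ Jt) ∨
        (∃ h : p.2 < p.1, (⟨(p.2, p.1), h⟩ : Idx2 n) ∈ Jt)) := by
    intro p; simp [hWdef]
  -- condition (1)
  have cond1 : ∀ p : Fin n × Fin n, p ∈ W ∨ p.swap ∈ W := by
    intro p
    rcases lt_trichotomy p.1 p.2 with h | h | h
    · by_cases hj : (⟨p, h⟩ : Idx2 n) ∈ Jt
      · right; rw [hmem]; exact Or.inr (Or.inr ⟨h, hj⟩)
      · left; rw [hmem]; exact Or.inr (Or.inl ⟨h, hj⟩)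
    · left; rw [hmem]; exact Or.inl h
    · by_cases hj : (⟨(p.2, p.1), h⟩ : Idx2 n) ∈ Jt
      · left; rw [hmem]; exact Or.inr (Or.inr ⟨h, hj⟩)
      · right; rw [hmem]; exact Or.inr (Or.inl ⟨h, hj⟩)
  -- condition (2)
  have cond2 : ∀ p : Fin n × Fin n, (p ∈ W ∧ p.swap ∈ W) ↔ p.1 = p.2 := by
    intro p
    constructor
    · rintro ⟨h1, h2⟩
      by_contra hne
      rw [hmem] at h1 h2
      rcases h1 with h | ⟨h, hj⟩ | ⟨h, hj⟩
      · exact hne h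
      · rcases h2 with h' | ⟨h', hj'⟩ | ⟨h', hj'⟩
        · exact hne h'.symm
        · exact absurd h' (asymm h)
        · exact hj hj'
      · rcases h2 with h' | ⟨h', hj'⟩ | ⟨h', hj'⟩
        · exact hne h'.symm
        · exact hj' hj
        · exact absurd h' (asymm h)
    · intro h
      constructor
      · rw [hmem]; exact Or.inl h
      · rw [hmem]; exact Or.inl h.symm
  -- characterization of W-indices
  have hcharr : ∀ p : WIdx W,
      (∃ h : p.1.1 < p.1.2, (⟨p.1, h⟩ : Idx2 n) ∉ Jt) ∨
      (∃ h : p.1.2 < p.1.1, (⟨(p.1.2, p.1.1), h⟩ : Idx2 n) ∈ Jt) := fun p =>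
    Or.resolve_left ((hmem p.1).1 p.2.1) p.2.2
  set ε : Fin n × Fin n → ℝ := fun p => if p.1 < p.2 then 1 else -1 with hεdef
  have hεpm : ∀ r, ε r = 1 ∨ ε r = -1 := by
    intro r; by_cases h : r.1 < r.2 <;> simp [hεdef, h]
  have hsign : ∀ p : WIdx W, σ (sortW W p) = ε p.1 := by
    intro p
    rcases hcharr p with ⟨h, hj⟩ | ⟨h, hj⟩
    · rw [sortW_pos W p h]
      simp only [hσdef, if_neg hj, hεdef, if_pos h]
    · rw [sortW_neg W p h]
      simp only [hσdef, if_pos hj, hεdef, if_neg (asymm h)]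
  have hentry : ∀ p q : WIdx W,
      compound2 A (sortW W p) (sortW W q) = ε p.1 * ε q.1 * Wmatrix A W p q := by
    intro p q
    rcases p.2.2.lt_or_gt with hp | hp <;> rcases q.2.2.lt_or_gt with hq | hq
    · rw [sortW_pos W p hp, sortW_pos W q hq]
      simp only [compound2, Wmatrix, hεdef, if_pos hp, if_pos hq]; ring
    · rw [sortW_pos W p hp, sortW_neg W q hq]
      simp only [compound2, Wmatrix, hεdef, if_pos hp, if_neg (asymm hq)]; ring
    · rw [sortW_neg W p hp, sortW_pos W q hq]
      simp only [compound2, Wmatrix, hεdef, if_neg (asymm hp), if_pos hq]; ring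
    · rw [sortW_neg W p hp, sortW_neg W q hq]
      simp only [compound2, Wmatrix, hεdef, if_neg (asymm hp), if_neg (asymm hq)]; ring
  have hnonneg : ∀ p q : WIdx W, 0 ≤ Wmatrix A W p q := by
    intro p q
    have hk := key (sortW W p) (sortW W q)
    rw [hsign p, hsign q, hentry p q] at hk
    rcases hεpm p.1 with h | h <;> rcases hεpm q.1 with h' | h' <;>
      rw [h, h'] at hk <;> linarith
  -- injectivity and surjectivity of sortW
  have finj : Function.Injective (sortW W) := by
    intro p q h
    rcases p.2.2.lt_or_gt with hp | hp <;> rcases q.2.2.lt_or_gt with hq | hq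
    · rw [sortW_pos W p hp, sortW_pos W q hq] at h
      have hv := congrArg Subtype.val h
      exact Subtype.ext hv
    · rw [sortW_pos W p hp, sortW_neg W q hq] at h
      exfalso
      have hv : p.1 = (q.1.2, q.1.1) := congrArg Subtype.val h
      have hsw : p.1.swap ∈ W := by rw [hv]; exact q.2.1
      exact p.2.2 ((cond2 p.1).1 ⟨p.2.1, hsw⟩)
    · rw [sortW_neg W p hp, sortW_pos W q hq] at h
      exfalso
      have hv : (p.1.2, p.1.1) = q.1 := congrArg Subtype.val h
      have hsw : p.1.swap ∈ W := by
        have h2 : p.1.swap = q.1 := hv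
        rw [h2]; exact q.2.1
      exact p.2.2 ((cond2 p.1).1 ⟨p.2.1, hsw⟩)
    · rw [sortW_neg W p hp, sortW_neg W q hq] at h
      have hv : (p.1.2, p.1.1) = (q.1.2, q.1.1) := congrArg Subtype.val h
      have h1 : p.1.2 = q.1.2 := congrArg Prod.fst hv
      have h2 : p.1.1 = q.1.1 := congrArg Prod.snd hv
      exact Subtype.ext (Prod.ext h2 h1)
  have fsurj : Function.Surjective (sortW W) := by
    intro r
    rcases cond1 r.1 with h | h
    · refine ⟨⟨r.1, h, ne_of_lt r.2⟩, ?_⟩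
      rw [sortW_pos W ⟨r.1, h, ne_of_lt r.2⟩ r.2]
    · refine ⟨⟨r.1.swap, h, (ne_of_lt r.2).symm⟩, ?_⟩
      rw [sortW_neg W ⟨r.1.swap, h, (ne_of_lt r.2).symm⟩ r.2]
      exact Subtype.ext rfl
  have hzero : ∀ p q : WIdx W, Wmatrix A W p q = 0 →
      compound2 A (sortW W p) (sortW W q) = 0 := by
    intro p q h; rw [hentry p q, h]; ring
  refine ⟨W, ⟨cond1, cond2⟩, hnonneg, ?_⟩
  intro hirr hred
  apply hirr
  obtain ⟨S, hSne, hSuniv, hS0⟩ := hred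
  refine ⟨S.image (sortW W), hSne.image _, ?_, ?_⟩
  · obtain ⟨p, hp⟩ : ∃ p, p ∉ S := by
      by_contra hcon; push_neg at hcon
      exact hSuniv (Finset.eq_univ_iff_forall.2 hcon)
    have hnotin : sortW W p ∉ S.image (sortW W) := by
      intro hmemI
      obtain ⟨x, hx, hfx⟩ := Finset.mem_image.1 hmemI
      exact hp (finj hfx ▸ hx)
    intro hEq
    exact hnotin (hEq ▸ Finset.mem_univ _)
  · intro r hr s hs
    obtain ⟨p, hpS, rfl⟩ := Finset.mem_image.1 hr
    obtain ⟨q, rfl⟩ := fsurj s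
    have hqS : q ∉ S := fun hq => hs (Finset.mem_image.2 ⟨q, hq, rfl⟩)
    exact hzero p q (hS0 p hpS q hqS)
end
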